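/- arXiv:1201.4552 — 3 statements merged into one kernel-verified Lean document; each statement's English description precedes it below -/
import Mathlib

section
/- The function $p \mapsto \textsc{F}(p) - \log p$ is non-decreasing on $(0,p_{\max}]$, where $\textsc{F}(p)$ is the almost-sure value of $\limsup_N N^{-1}\log Z_N$ on the percolation event (and $-\infty$ if percolation does not occur). -/
open MeasureTheory ProbabilityTheory Filter

noncomputable section

/-- Transversal lattice `ℤ^d`. -/
abbrev Zd (d : ℕ) := Fin d → ℤ

/-- A percolation environment on `ℕ × ℤ^d`: `X n x y` tells whether the oriented
edge from `(n, x)` to `(n+1, y)` is open. -/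
abbrev Env (d : ℕ) := ℕ → Zd d → Zd d → Bool

/-- The edge variable associated to an edge `e = (n, x, y)`. -/
def edgeVal (d : ℕ) (e : ℕ × Zd d × Zd d) (X : Env d) : Bool := X e.1 e.2.1 e.2.2

/-- `pathCount d N X` = number of open oriented paths of length `N` starting at the origin. -/
def pathCount (d N : ℕ) (X : Env d) : ℕ :=
  Nat.card {S : Fin (N + 1) → Zd d //
    S 0 = 0 ∧ ∀ i : Fin N, X i (S i.castSucc) (S i.succ) = true}

/-- `pathCountTo d N x X` = number of open oriented paths from `(0,0)` to `(N,x)`. -/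
def pathCountTo (d N : ℕ) (x : Zd d) (X : Env d) : ℕ :=
  Nat.card {S : Fin (N + 1) → Zd d //
    S 0 = 0 ∧ S (Fin.last N) = x ∧ ∀ i : Fin N, X i (S i.castSucc) (S i.succ) = true}

/-- The renormalized partition function `W_N = p^{-N} Z_N`. -/
def W (d : ℕ) (p : ℝ) (N : ℕ) (X : Env d) : ℝ := (pathCount d N X : ℝ) / p ^ N

/-- The percolation event: existence of an infinite open oriented path from the origin. -/
def percEvent (d : ℕ) : Set (Env d) :=
  {X | ∃ S : ℕ → Zd d, S 0 = 0 ∧ ∀ n, X n (S n) (S (n + 1)) = true}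

/-- The sigma-algebra generated by the edge variables in time layers `0, …, N-1`. -/
def cylFilt (d : ℕ) (N : ℕ) : MeasurableSpace (Env d) :=
  MeasurableSpace.comap (fun X => fun (n : Fin N) (x y : Zd d) => X n x y) inferInstance

/-- The environment law: independent Bernoulli edge variables, the edge `(n,x) → (n+1,y)`
being open with probability `p · f (y - x)`. -/
def bernoulliEnv (d : ℕ) (p : ℝ) (f : Zd d → ℝ) (μ : Measure (Env d)) : Prop :=
  iIndepFun (fun e : ℕ × Zd d × Zd d => edgeVal d e) μ ∧
  ∀ n x y, μ {X | X n x y = true} = ENNReal.ofReal (p * f (y - x))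

/-- `N⁻¹ log Z_N` as an extended real, with value `⊥` when `Z_N = 0`. -/
def growthTerm (d : ℕ) (X : Env d) (N : ℕ) : EReal :=
  if pathCount d N X = 0 then ⊥ else ((Real.log (pathCount d N X) / N : ℝ) : EReal)

/-- The environment shifted in time by `N` and in space by `x`. -/
def shiftEnv (d N : ℕ) (x : Zd d) (X : Env d) : Env d := fun n u v => X (n + N) (u + x) (v + x)

/-- The size-biased (tilted) environment: all edges along the walk path `T` (up to time `N`)
are forced open. -/
def tiltEnv (d N : ℕ) (T : Fin (N + 1) → Zd d) (X : Env d) : Env d := fun n x y =>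
  if h : n < N then
    (if T ⟨n, Nat.lt_succ_of_lt h⟩ = x ∧ T ⟨n + 1, Nat.succ_lt_succ h⟩ = y then true else X n x y)
  else X n x y

/-- The probability that a random walk with step distribution `f` started at `0`
follows the path `T` up to time `N`. -/
def walkWeight (d N : ℕ) (f : Zd d → ℝ) (T : Fin (N + 1) → Zd d) : ℝ :=
  if T 0 = 0 then ∏ i : Fin N, f (T i.succ - T i.castSucc) else 0

/-- `(ℙ_p ⊗ P)(W̃_N ≤ K)`: the probability, under the environment law `μ` and an
independent `f`-walk `T`, that the size-biased renormalized partition function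
`W̃_N = p^{-N} Z̃_N` is at most `K`. -/
def tiltTailProb (d N : ℕ) (f : Zd d → ℝ) (p : ℝ) (μ : Measure (Env d)) (K : ℝ) : ℝ :=
  ∑ᶠ T : Fin (N + 1) → Zd d, walkWeight d N f T *
    (μ {X | (pathCount d N (tiltEnv d N T X) : ℝ) / p ^ N ≤ K}).toReal

/-- Tilted environment for an infinite walk `T`: all edges along `T` are forced open. -/
def tiltEnvFull (d : ℕ) (T : ℕ → Zd d) (X : Env d) : Env d := fun n x y =>
  if T n = x ∧ T (n + 1) = y then true else X n x y

/-- The pinned size-biased partition function `Z̄_N`: number of oriented paths from `(0,0)`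
to `(N, T_N)` which are open for the tilted environment. -/
def barZ (d N : ℕ) (T : ℕ → Zd d) (X : Env d) : ℕ :=
  Nat.card {S : Fin (N + 1) → Zd d // S 0 = 0 ∧ S (Fin.last N) = T N ∧
    ∀ i : Fin N, tiltEnvFull d T X i (S i.castSucc) (S i.succ) = true}

/-- Version of `Z̄_N` for a finite walk path `T` of length `N`. -/
def barZfin (d N : ℕ) (T : Fin (N + 1) → Zd d) (X : Env d) : ℕ :=
  Nat.card {S : Fin (N + 1) → Zd d // S 0 = 0 ∧ S (Fin.last N) = T (Fin.last N) ∧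
    ∀ i : Fin N, tiltEnv d N T X i (S i.castSucc) (S i.succ) = true}

/-- The environment shifted by `N` in time and `v` in space. -/
def envSpaceShift (d N : ℕ) (v : Zd d) (X : Env d) : Env d := fun n x y => X (n + N) (x + v) (y + v)

/-- The walk observed after time `N`, recentered at the origin. -/
def walkShift (d N : ℕ) (T : ℕ → Zd d) : ℕ → Zd d := fun n => T (n + N) - T N

/-- `ν` is the law of the random walk started at `0` with i.i.d. increments of law `f`. -/
def isWalkLaw (d : ℕ) (f : Zd d → ℝ) (ν : Measure (ℕ → Zd d)) : Prop :=
  ∀ (M : ℕ) (T' : Fin (M + 1) → Zd d),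
    ν {T | ∀ i : Fin (M + 1), T (i : ℕ) = T' i} = ENNReal.ofReal (walkWeight d M f T')

/-- Monotone coupling of environments at all parameters via uniform variables. -/
def coupledEnv {Ω : Type*} (d : ℕ) (f : Zd d → ℝ) (U : ℕ → Zd d → Zd d → Ω → ℝ)
    (q : ℝ) (ω : Ω) : Env d := fun n x y => decide (U n x y ω ≤ f (y - x) * q)

/-- `k`-fold discrete convolution `f^{∗k}` (the `k`-step transition probability). -/
def fconv (d : ℕ) (f : Zd d → ℝ) : ℕ → Zd d → ℝ
  | 0 => fun z => if z = 0 then 1 else 0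
  | (k + 1) => fun z => ∑ᶠ y, f y * fconv d f k (z - y)

open Pointwise

namespace Stmt7

variable {d : ℕ}

/-- Points reachable in `k` steps with increments in the support of `f`. -/
def reachSet (f : Zd d → ℝ) (hfin : (Function.support f).Finite) : ℕ → Finset (Zd d)
  | 0 => {0}
  | (k + 1) => reachSet f hfin k + hfin.toFinset

open Classical in
/-- The finite set of candidate paths: start at `0`, steps in the support of `f`. -/
noncomputable def pathsN (f : Zd d → ℝ) (hfin : (Function.support f).Finite) (N : ℕ) :
    Finset (Fin (N + 1) → Zd d) :=
  (Fintype.piFinset (fun j : Fin (N + 1) => reachSet f hfin (j : ℕ))).filter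
    (fun S => S 0 = 0 ∧ ∀ i : Fin N, S i.succ - S i.castSucc ∈ hfin.toFinset)

lemma mem_pathsN {f : Zd d → ℝ} {hfin : (Function.support f).Finite} {N : ℕ}
    {S : Fin (N + 1) → Zd d} :
    S ∈ pathsN f hfin N ↔ S 0 = 0 ∧ ∀ i : Fin N, f (S i.succ - S i.castSucc) ≠ 0 := by
  classical
  constructor
  · rintro hS
    simp only [pathsN, Finset.mem_filter] at hS
    refine ⟨hS.2.1, fun i => ?_⟩
    have := hS.2.2 i
    rwa [Set.Finite.mem_toFinset, Function.mem_support] at this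
  · rintro ⟨h0, hstep⟩
    have hstep' : ∀ i : Fin N, S i.succ - S i.castSucc ∈ hfin.toFinset := by
      intro i; rw [Set.Finite.mem_toFinset, Function.mem_support]; exact hstep i
    simp only [pathsN, Finset.mem_filter]
    refine ⟨?_, h0, hstep'⟩
    rw [Fintype.mem_piFinset]
    have key : ∀ (j : ℕ) (hj : j < N + 1), S ⟨j, hj⟩ ∈ reachSet f hfin j := by
      intro j
      induction j with
      | zero => intro hj; simpa [reachSet, show (⟨0, hj⟩ : Fin (N+1)) = 0 from rfl, h0] using rfl
      | succ k ih =>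
        intro hj
        have hkN : k < N := Nat.lt_of_succ_lt_succ hj
        have hk : k < N + 1 := Nat.lt_of_succ_lt hj
        have e1 : (⟨k, hk⟩ : Fin (N+1)) = (⟨k, hkN⟩ : Fin N).castSucc := rfl
        have e2 : (⟨k + 1, hj⟩ : Fin (N+1)) = (⟨k, hkN⟩ : Fin N).succ := rfl
        have : S ⟨k + 1, hj⟩ =
            S ⟨k, hk⟩ + (S (⟨k, hkN⟩ : Fin N).succ - S (⟨k, hkN⟩ : Fin N).castSucc) := by
          rw [e1, e2]; abel
        rw [this, reachSet]
        exact Finset.add_mem_add (ih hk) (hstep' _)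
    intro j
    have := key (j : ℕ) j.isLt
    simpa using this

/-- Extracting the step sequence is injective on paths. -/
lemma pathsN_inj {N : ℕ}
    {S S' : Fin (N + 1) → Zd d} (hS : S 0 = 0) (hS' : S' 0 = 0)
    (h : ∀ i : Fin N, S i.succ - S i.castSucc = S' i.succ - S' i.castSucc) : S = S' := by
  have key : ∀ (j : ℕ) (hj : j < N + 1), S ⟨j, hj⟩ = S' ⟨j, hj⟩ := by
    intro j
    induction j with
    | zero => intro hj
              have : (⟨0, hj⟩ : Fin (N+1)) = 0 := rfl
              rw [this, hS, hS']
    | succ k ih =>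
      intro hj
      have hkN : k < N := Nat.lt_of_succ_lt_succ hj
      have hk : k < N + 1 := Nat.lt_of_succ_lt hj
      have e1 : (⟨k, hk⟩ : Fin (N+1)) = (⟨k, hkN⟩ : Fin N).castSucc := rfl
      have e2 : (⟨k + 1, hj⟩ : Fin (N+1)) = (⟨k, hkN⟩ : Fin N).succ := rfl
      have hh := h ⟨k, hkN⟩
      have ihk : S (⟨k, hkN⟩ : Fin N).castSucc = S' (⟨k, hkN⟩ : Fin N).castSucc := by
        rw [← e1]; exact ih hk
      rw [e2]
      have expand : S (⟨k, hkN⟩ : Fin N).succ =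
          S (⟨k, hkN⟩ : Fin N).castSucc +
            (S (⟨k, hkN⟩ : Fin N).succ - S (⟨k, hkN⟩ : Fin N).castSucc) := by abel
      rw [expand, hh, ihk]; abel
  funext j
  have := key (j : ℕ) j.isLt
  simpa using this

lemma card_pathsN_le {f : Zd d → ℝ} {hfin : (Function.support f).Finite} {N : ℕ} :
    (pathsN f hfin N).card ≤ hfin.toFinset.card ^ N := by
  classical
  have : (pathsN f hfin N).card ≤
      (Fintype.piFinset (fun _ : Fin N => hfin.toFinset)).card := by
    apply Finset.card_le_card_of_injOn (fun S => fun i : Fin N => S i.succ - S i.castSucc)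
    · intro S hS
      rw [Finset.mem_coe, Fintype.mem_piFinset]
      intro i
      rw [Set.Finite.mem_toFinset, Function.mem_support]
      exact (mem_pathsN.1 hS).2 i
    · intro S hS S' hS' hh
      exact pathsN_inj (mem_pathsN.1 hS).1 (mem_pathsN.1 hS').1 (fun i => congrFun hh i)
  simpa using this

end Stmt7
namespace Stmt7

variable {Ω : Type} [MeasurableSpace Ω] {d : ℕ}

/-- The edge used at time `i` by a path `S`. -/
def edgeOf (N : ℕ) (S : Fin (N + 1) → Zd d) (i : Fin N) : ℕ × Zd d × Zd d :=
  ((i : ℕ), S i.castSucc, S i.succ)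

/-- The edges of a path. -/
def ES (N : ℕ) (S : Fin (N + 1) → Zd d) : Finset (ℕ × Zd d × Zd d) :=
  Finset.image (edgeOf N S) Finset.univ

/-- The event that edge `e` is open at parameter `q`. -/
def openEv (f : Zd d → ℝ) (U : ℕ → Zd d → Zd d → Ω → ℝ) (q : ℝ)
    (e : ℕ × Zd d × Zd d) : Set Ω :=
  {ω | U e.1 e.2.1 e.2.2 ω ≤ f (e.2.2 - e.2.1) * q}

/-- The event that the path `S` is open at parameter `q`. -/
def OpC (f : Zd d → ℝ) (U : ℕ → Zd d → Zd d → Ω → ℝ) (q : ℝ) (N : ℕ)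
    (S : Fin (N + 1) → Zd d) : Set Ω :=
  {ω | ∀ i : Fin N, ω ∈ openEv f U q (edgeOf N S i)}

lemma OpC_eq_biInter (f : Zd d → ℝ) (U : ℕ → Zd d → Zd d → Ω → ℝ) (q : ℝ) (N : ℕ)
    (S : Fin (N + 1) → Zd d) :
    OpC f U q N S = ⋂ e ∈ ES N S, openEv f U q e := by
  ext ω
  simp only [OpC, Set.mem_setOf_eq, Set.mem_iInter, ES, Finset.mem_image, Finset.mem_univ,
    true_and]
  constructor
  · rintro h e ⟨i, rfl⟩; exact h i
  · intro h i; exact h _ ⟨i, rfl⟩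

/-- The truncated path count. -/
noncomputable def Zt (f : Zd d → ℝ) (hfin : (Function.support f).Finite)
    (U : ℕ → Zd d → Zd d → Ω → ℝ) (q : ℝ) (N : ℕ) (ω : Ω) : ℕ :=
  ∑ S ∈ pathsN f hfin N, Set.indicator (OpC f U q N S) (fun _ => 1) ω

/-- The forced path count: edges of `T` count as open. -/
noncomputable def Zf (f : Zd d → ℝ) (hfin : (Function.support f).Finite)
    (U : ℕ → Zd d → Zd d → Ω → ℝ) (q : ℝ) (N : ℕ) (T : Fin (N + 1) → Zd d) (ω : Ω) : ℕ :=
  ∑ S ∈ pathsN f hfin N, Set.indicator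
    {ω' | ∀ i : Fin N, edgeOf N S i ∈ ES N T ∨ ω' ∈ openEv f U q (edgeOf N S i)}
    (fun _ => 1) ω

variable {f : Zd d → ℝ} {hfin : (Function.support f).Finite}
  {U : ℕ → Zd d → Zd d → Ω → ℝ}

lemma OpC_mono {q q' : ℝ} (hf0 : ∀ z, 0 ≤ f z) (hq : q ≤ q') {N : ℕ}
    {S : Fin (N + 1) → Zd d} : OpC f U q N S ⊆ OpC f U q' N S := by
  intro ω h i
  exact le_trans (h i) (mul_le_mul_of_nonneg_left hq (hf0 _))

lemma Zt_mono {q q' : ℝ} (hf0 : ∀ z, 0 ≤ f z) (hq : q ≤ q') (N : ℕ) (ω : Ω) :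
    Zt f hfin U q N ω ≤ Zt f hfin U q' N ω := by
  apply Finset.sum_le_sum
  intro S _
  by_cases h : ω ∈ OpC f U q N S
  · rw [Set.indicator_of_mem h, Set.indicator_of_mem (OpC_mono hf0 hq h)]
  · rw [Set.indicator_of_notMem h]; exact Nat.zero_le _

lemma Zt_le_card (q : ℝ) (N : ℕ) (ω : Ω) :
    Zt f hfin U q N ω ≤ (pathsN f hfin N).card := by
  classical
  calc Zt f hfin U q N ω ≤ ∑ _S ∈ pathsN f hfin N, 1 := by
        apply Finset.sum_le_sum
        intro S _
        exact Set.indicator_le' (fun _ _ => le_refl _) (fun _ _ => Nat.zero_le _) ω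
    _ = (pathsN f hfin N).card := by simp

lemma measurable_openEv (hUmeas : ∀ n x y, Measurable (U n x y)) (q : ℝ)
    (e : ℕ × Zd d × Zd d) : MeasurableSet (openEv f U q e) :=
  (hUmeas e.1 e.2.1 e.2.2) measurableSet_Iic

lemma measurable_OpC (hUmeas : ∀ n x y, Measurable (U n x y)) (q : ℝ) (N : ℕ)
    (S : Fin (N + 1) → Zd d) : MeasurableSet (OpC f U q N S) := by
  have : OpC f U q N S = ⋂ i : Fin N, openEv f U q (edgeOf N S i) := by
    ext ω; simp [OpC]
  rw [this]
  exact MeasurableSet.iInter (fun i => measurable_openEv hUmeas q _)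

lemma measurable_Zt (hUmeas : ∀ n x y, Measurable (U n x y)) (q : ℝ) (N : ℕ) :
    Measurable (Zt f hfin U q N) := by
  apply Finset.measurable_sum
  intro S _
  exact (measurable_const.indicator (measurable_OpC hUmeas q N S))

end Stmt7
namespace Stmt7

open MeasureTheory ProbabilityTheory

variable {Ω : Type} [MeasurableSpace Ω] {d : ℕ}
  {μ : Measure Ω} [IsProbabilityMeasure μ]
  {f : Zd d → ℝ} {hfin : (Function.support f).Finite}
  {U : ℕ → Zd d → Zd d → Ω → ℝ}

lemma measUle (hUmeas : ∀ n x y, Measurable (U n x y))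
    (hUunif : ∀ n x y, μ.map (U n x y) = (volume : Measure ℝ).restrict (Set.Icc 0 1))
    (n : ℕ) (x y : Zd d) {c : ℝ} (hc0 : 0 ≤ c) (hc1 : c ≤ 1) :
    μ {ω | U n x y ω ≤ c} = ENNReal.ofReal c := by
  have : {ω | U n x y ω ≤ c} = (U n x y) ⁻¹' (Set.Iic c) := rfl
  rw [this, ← Measure.map_apply (hUmeas n x y) measurableSet_Iic, hUunif,
    Measure.restrict_apply measurableSet_Iic]
  have : Set.Iic c ∩ Set.Icc 0 1 = Set.Icc 0 c := by
    ext z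
    simp only [Set.mem_inter_iff, Set.mem_Iic, Set.mem_Icc]
    constructor
    · rintro ⟨h1, h2, h3⟩; exact ⟨h2, h1⟩
    · rintro ⟨h1, h2⟩; exact ⟨h2, h1, le_trans h2 hc1⟩
  rw [this, Real.volume_Icc, sub_zero]

lemma measOpC (hUmeas : ∀ n x y, Measurable (U n x y))
    (hUunif : ∀ n x y, μ.map (U n x y) = (volume : Measure ℝ).restrict (Set.Icc 0 1))
    (hUindep : iIndepFun
      (fun e : ℕ × Zd d × Zd d => U e.1 e.2.1 e.2.2) μ)
    (hf0 : ∀ z, 0 ≤ f z) {q : ℝ} (hq0 : 0 ≤ q) (hq1 : ∀ z, f z * q ≤ 1)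
    (N : ℕ) (S : Fin (N + 1) → Zd d) :
    μ (OpC f U q N S) =
      ENNReal.ofReal (∏ i : Fin N, f (S i.succ - S i.castSucc) * q) := by
  classical
  rw [OpC_eq_biInter]
  rw [hUindep.meas_biInter (S := ES N S) (s := openEv f U q)
    (fun e _ => ⟨Set.Iic (f (e.2.2 - e.2.1) * q), measurableSet_Iic, rfl⟩)]
  have hinj : Set.InjOn (edgeOf N S) ↑(Finset.univ : Finset (Fin N)) := by
    intro i _ j _ h
    have : (i : ℕ) = (j : ℕ) := congrArg Prod.fst h
    exact Fin.val_injective this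
  rw [ES, Finset.prod_image (fun i hi j hj h => hinj hi hj h)]
  rw [ENNReal.ofReal_prod_of_nonneg (fun i _ => mul_nonneg (hf0 _) hq0)]
  apply Finset.prod_congr rfl
  intro i _
  exact measUle hUmeas hUunif _ _ _ (mul_nonneg (hf0 _) hq0) (hq1 _)

set_option maxHeartbeats 800000 in
lemma indep_events_of_disjoint {ι : Type*} {Ω' : Type} [MeasurableSpace Ω'] {μ' : Measure Ω'}
    {V : ι → Ω' → ℝ} (hV : ∀ i, Measurable (V i))
    (hind : iIndepFun V μ') (E : Set ι) {A B : Set Ω'}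
    (hA : MeasurableSet[⨆ i ∈ E, MeasurableSpace.comap (V i) inferInstance] A)
    (hB : MeasurableSet[⨆ i ∈ Eᶜ, MeasurableSpace.comap (V i) inferInstance] B) :
    μ' (A ∩ B) = μ' A * μ' B := by
  have hindep : Indep (⨆ i ∈ E, MeasurableSpace.comap (V i) inferInstance)
      (⨆ i ∈ Eᶜ, MeasurableSpace.comap (V i) inferInstance) μ' :=
    indep_iSup_of_disjoint (fun i => (hV i).comap_le) hind.iIndep disjoint_compl_right
  exact (Indep_iff _ _ μ').mp hindep _ _ hA hB

set_option maxHeartbeats 1000000 in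
lemma measurable_Zf_comap (hUmeas : ∀ n x y, Measurable (U n x y)) (q : ℝ) (N : ℕ)
    (T : Fin (N + 1) → Zd d) :
    Measurable[⨆ e ∈ ((ES N T : Finset (ℕ × Zd d × Zd d)) : Set (ℕ × Zd d × Zd d))ᶜ,
        MeasurableSpace.comap (fun ω => U e.1 e.2.1 e.2.2 ω) inferInstance]
      (Zf f hfin U q N T) := by
  classical
  set M₂ : MeasurableSpace Ω := ⨆ e ∈ ((ES N T : Finset (ℕ × Zd d × Zd d)) :
      Set (ℕ × Zd d × Zd d))ᶜ,
    MeasurableSpace.comap (fun ω => U e.1 e.2.1 e.2.2 ω) inferInstance with hM₂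
  apply Finset.measurable_sum
  intro S _
  apply Measurable.indicator (measurable_const)
  have : {ω' : Ω | ∀ i : Fin N, edgeOf N S i ∈ ES N T ∨ ω' ∈ openEv f U q (edgeOf N S i)} =
      ⋂ i : Fin N, {ω' | edgeOf N S i ∈ ES N T ∨ ω' ∈ openEv f U q (edgeOf N S i)} := by
    ext ω'; simp
  rw [this]
  apply MeasurableSet.iInter
  intro i
  by_cases h : edgeOf N S i ∈ ES N T
  · have : {ω' : Ω | edgeOf N S i ∈ ES N T ∨ ω' ∈ openEv f U q (edgeOf N S i)} =
        Set.univ := by ext ω'; simp [h]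
    rw [this]; exact MeasurableSet.univ
  · have heq : {ω' : Ω | edgeOf N S i ∈ ES N T ∨ ω' ∈ openEv f U q (edgeOf N S i)} =
        openEv f U q (edgeOf N S i) := by ext ω'; simp [h]
    rw [heq]
    have hle : MeasurableSpace.comap
        (fun ω => U (edgeOf N S i).1 (edgeOf N S i).2.1 (edgeOf N S i).2.2 ω)
          inferInstance ≤ M₂ := by
      rw [hM₂]
      exact le_iSup₂ (f := fun (e : ℕ × Zd d × Zd d)
        (_ : e ∈ ((ES N T : Finset (ℕ × Zd d × Zd d)) : Set (ℕ × Zd d × Zd d))ᶜ) =>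
          MeasurableSpace.comap (fun ω => U e.1 e.2.1 e.2.2 ω) inferInstance)
        (edgeOf N S i) h
    exact hle _ ⟨Set.Iic _, measurableSet_Iic, rfl⟩

set_option maxHeartbeats 1000000 in
lemma indepOpZf (hUmeas : ∀ n x y, Measurable (U n x y))
    (hUindep : iIndepFun
      (fun e : ℕ × Zd d × Zd d => U e.1 e.2.1 e.2.2) μ)
    (q q' : ℝ) (N : ℕ) (T : Fin (N + 1) → Zd d) (m : ℕ) :
    μ (OpC f U q N T ∩ {ω | Zf f hfin U q' N T ω = m}) =
      μ (OpC f U q N T) * μ {ω | Zf f hfin U q' N T ω = m} := by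
  classical
  apply indep_events_of_disjoint (V := fun e : ℕ × Zd d × Zd d => U e.1 e.2.1 e.2.2)
    (fun e => hUmeas e.1 e.2.1 e.2.2) hUindep
    ((ES N T : Finset (ℕ × Zd d × Zd d)) : Set (ℕ × Zd d × Zd d))
  · rw [OpC_eq_biInter]
    have : (⋂ e ∈ ES N T, openEv f U q e) =
        ⋂ e ∈ ((ES N T : Finset (ℕ × Zd d × Zd d)) : Set (ℕ × Zd d × Zd d)),
          openEv f U q e := by simp
    rw [this]
    apply MeasurableSet.biInter (Finset.countable_toSet _)
    intro e he
    have hle : MeasurableSpace.comap (fun ω => U e.1 e.2.1 e.2.2 ω) inferInstance ≤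
        ⨆ e ∈ ((ES N T : Finset (ℕ × Zd d × Zd d)) : Set (ℕ × Zd d × Zd d)),
          MeasurableSpace.comap (fun ω => U e.1 e.2.1 e.2.2 ω) inferInstance :=
      le_iSup₂ (f := fun (e : ℕ × Zd d × Zd d)
        (_ : e ∈ ((ES N T : Finset (ℕ × Zd d × Zd d)) : Set (ℕ × Zd d × Zd d))) =>
          MeasurableSpace.comap (fun ω => U e.1 e.2.1 e.2.2 ω) inferInstance) e he
    exact hle _ ⟨Set.Iic _, measurableSet_Iic, rfl⟩
  · have : {ω | Zf f hfin U q' N T ω = m} = (Zf f hfin U q' N T) ⁻¹' {m} := rfl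
    rw [this]
    exact measurable_Zf_comap hUmeas q' N T (measurableSet_singleton m)

end Stmt7
namespace Stmt7

open MeasureTheory ProbabilityTheory
open scoped ENNReal

variable {Ω : Type} [MeasurableSpace Ω] {d : ℕ}
  {μ : Measure Ω} [IsProbabilityMeasure μ]
  {f : Zd d → ℝ} {hfin : (Function.support f).Finite}
  {U : ℕ → Zd d → Zd d → Ω → ℝ}

lemma edge_mem_ES {N : ℕ} {S T : Fin (N + 1) → Zd d} {i : Fin N} :
    edgeOf N S i ∈ ES N T ↔ edgeOf N S i = edgeOf N T i := by
  constructor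
  · intro h
    rcases Finset.mem_image.1 h with ⟨j, _, hj⟩
    have hij : (j : ℕ) = (i : ℕ) := congrArg Prod.fst hj
    have : j = i := Fin.val_injective hij
    rw [← hj, this]
  · intro h; rw [h]; exact Finset.mem_image.2 ⟨i, Finset.mem_univ _, rfl⟩

lemma Zf_eq_Zt_on {q : ℝ} {N : ℕ} {T : Fin (N + 1) → Zd d} {ω : Ω}
    (hω : ω ∈ OpC f U q N T) : Zf f hfin U q N T ω = Zt f hfin U q N ω := by
  apply Finset.sum_congr rfl
  intro S _
  have : ω ∈ {ω' | ∀ i : Fin N, edgeOf N S i ∈ ES N T ∨ ω' ∈ openEv f U q (edgeOf N S i)}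
      ↔ ω ∈ OpC f U q N S := by
    constructor
    · intro h i
      rcases h i with h' | h'
      · have := edge_mem_ES.1 h'
        rw [this]; exact hω i
      · exact h'
    · intro h i; exact Or.inr (h i)
  by_cases h : ω ∈ OpC f U q N S
  · rw [Set.indicator_of_mem h, Set.indicator_of_mem (this.2 h)]
  · rw [Set.indicator_of_notMem h, Set.indicator_of_notMem (fun hc => h (this.1 hc))]

lemma setLintegral_Zt (hUmeas : ∀ n x y, Measurable (U n x y)) (q : ℝ) (N : ℕ)
    {B : Set Ω} (hB : MeasurableSet B) :
    ∫⁻ ω in B, (Zt f hfin U q N ω : ℝ≥0∞) ∂μ =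
      ∑ S ∈ pathsN f hfin N, μ (OpC f U q N S ∩ B) := by
  have hcast : ∀ ω : Ω, ((Zt f hfin U q N ω : ℕ) : ℝ≥0∞) =
      ∑ S ∈ pathsN f hfin N, (OpC f U q N S).indicator (fun _ => (1 : ℝ≥0∞)) ω := by
    intro ω
    rw [Zt, Nat.cast_sum]
    apply Finset.sum_congr rfl
    intro S _
    by_cases h : ω ∈ OpC f U q N S <;> simp [h]
  calc ∫⁻ ω in B, (Zt f hfin U q N ω : ℝ≥0∞) ∂μ
      = ∫⁻ ω in B, ∑ S ∈ pathsN f hfin N,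
          (OpC f U q N S).indicator (fun _ => (1 : ℝ≥0∞)) ω ∂μ := by
        apply lintegral_congr; intro ω; exact hcast ω
    _ = ∑ S ∈ pathsN f hfin N, ∫⁻ ω in B,
          (OpC f U q N S).indicator (fun _ => (1 : ℝ≥0∞)) ω ∂μ := by
        apply lintegral_finset_sum
        intro S _
        exact measurable_const.indicator (measurable_OpC hUmeas q N S)
    _ = ∑ S ∈ pathsN f hfin N, μ (OpC f U q N S ∩ B) := by
        apply Finset.sum_congr rfl
        intro S _
        rw [lintegral_indicator (measurable_OpC hUmeas q N S), setLIntegral_one,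
          Measure.restrict_apply (measurable_OpC hUmeas q N S)]

lemma keyS (hUmeas : ∀ n x y, Measurable (U n x y))
    (hUunif : ∀ n x y, μ.map (U n x y) = (volume : Measure ℝ).restrict (Set.Icc 0 1))
    (hUindep : iIndepFun
      (fun e : ℕ × Zd d × Zd d => U e.1 e.2.1 e.2.2) μ)
    (hf0 : ∀ z, 0 ≤ f z) {q p : ℝ} (hq0 : 0 ≤ q) (hqp : q ≤ p) (hp1 : ∀ z, f z * p ≤ 1)
    (N : ℕ) (S : Fin (N + 1) → Zd d) (m : ℕ) :
    μ (OpC f U q N S ∩ {ω | Zt f hfin U p N ω = m}) =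
      ENNReal.ofReal (∏ i : Fin N, f (S i.succ - S i.castSucc) * q) *
        μ {ω | Zf f hfin U p N S ω = m} := by
  have hsub : OpC f U q N S ⊆ OpC f U p N S := OpC_mono hf0 hqp
  have hset : OpC f U q N S ∩ {ω | Zt f hfin U p N ω = m} =
      OpC f U q N S ∩ {ω | Zf f hfin U p N S ω = m} := by
    ext ω
    simp only [Set.mem_inter_iff, Set.mem_setOf_eq]
    constructor
    · rintro ⟨h1, h2⟩; exact ⟨h1, by rw [Zf_eq_Zt_on (hsub h1)]; exact h2⟩
    · rintro ⟨h1, h2⟩; exact ⟨h1, by rw [← Zf_eq_Zt_on (hsub h1)]; exact h2⟩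
  rw [hset, indepOpZf hUmeas hUindep q p N S m,
    measOpC hUmeas hUunif hUindep hf0 hq0
      (fun z => le_trans (mul_le_mul_of_nonneg_left hqp (hf0 z)) (hp1 z)) N S]

end Stmt7
namespace Stmt7

open MeasureTheory ProbabilityTheory
open scoped ENNReal

variable {Ω : Type} [MeasurableSpace Ω] {d : ℕ}
  {μ : Measure Ω} [IsProbabilityMeasure μ]
  {f : Zd d → ℝ} {hfin : (Function.support f).Finite}
  {U : ℕ → Zd d → Zd d → Ω → ℝ}

lemma measurable_Zt_cast (hUmeas : ∀ n x y, Measurable (U n x y)) (q : ℝ) (N : ℕ) :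
    Measurable (fun ω : Ω => (Zt f hfin U q N ω : ℝ)) :=
  Measurable.comp (measurable_from_top) (measurable_Zt hUmeas q N)

/-- The key Markov/conditional-expectation estimate. -/
lemma keyEstimate (hUmeas : ∀ n x y, Measurable (U n x y))
    (hUunif : ∀ n x y, μ.map (U n x y) = (volume : Measure ℝ).restrict (Set.Icc 0 1))
    (hUindep : iIndepFun
      (fun e : ℕ × Zd d × Zd d => U e.1 e.2.1 e.2.2) μ)
    (hf0 : ∀ z, 0 ≤ f z) {p' p : ℝ} (hp'0 : 0 < p') (hp'p : p' ≤ p)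
    (hp1 : ∀ z, f z * p ≤ 1) {t : ℝ} (ht : 0 < t) (N : ℕ) :
    μ {ω | t * (Zt f hfin U p N ω : ℝ) < (Zt f hfin U p' N ω : ℝ)} ≤
      ENNReal.ofReal ((p' / p) ^ N / t) := by
  classical
  have hp0 : 0 < p := lt_of_lt_of_le hp'0 hp'p
  set c : ℝ := (p' / p) ^ N with hc
  have hc0 : 0 ≤ c := pow_nonneg (div_nonneg hp'0.le hp0.le) N
  set Mc := (pathsN f hfin N).card with hMc
  set Am : ℕ → Set Ω := fun m =>
    {ω | Zt f hfin U p N ω = m} ∩ {ω | t * (m : ℝ) < (Zt f hfin U p' N ω : ℝ)} with hAm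
  have hAmeas : ∀ m, MeasurableSet (Am m) := by
    intro m
    exact ((measurable_Zt hUmeas p N) (measurableSet_singleton m)).inter
      ((measurable_Zt_cast hUmeas p' N) measurableSet_Ioi)
  have hZm_meas : ∀ m : ℕ, MeasurableSet {ω | Zt f hfin U p N ω = m} := by
    intro m; exact (measurable_Zt hUmeas p N) (measurableSet_singleton m)
  -- Step 1: covering
  have hcover : {ω | t * (Zt f hfin U p N ω : ℝ) < (Zt f hfin U p' N ω : ℝ)} ⊆
      ⋃ m ∈ Finset.Icc 1 Mc, Am m := by
    intro ω hω
    simp only [Set.mem_setOf_eq] at hω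
    have hm1 : 1 ≤ Zt f hfin U p N ω := by
      by_contra h
      push_neg at h
      have h0 : Zt f hfin U p N ω = 0 := Nat.lt_one_iff.mp h
      have hle : Zt f hfin U p' N ω = 0 :=
        Nat.le_zero.mp (h0 ▸ Zt_mono hf0 hp'p N ω)
      rw [h0, hle] at hω
      simp at hω
    exact Set.mem_biUnion (Finset.mem_Icc.2 ⟨hm1, Zt_le_card p N ω⟩) ⟨rfl, hω⟩
  -- Step 2: per-m bound
  have hperm : ∀ m ∈ Finset.Icc 1 Mc,
      μ (Am m) ≤ ENNReal.ofReal (c / t) * μ {ω | Zt f hfin U p N ω = m} := by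
    intro m hm
    have hm1 : 1 ≤ m := (Finset.mem_Icc.1 hm).1
    have hmne : (m : ℝ≥0∞) ≠ 0 := Nat.cast_ne_zero.mpr (Nat.one_le_iff_ne_zero.mp hm1)
    have hmtop : (m : ℝ≥0∞) ≠ ⊤ := ENNReal.natCast_ne_top m
    have hsubm : Am m ⊆ {ω | Zt f hfin U p N ω = m} := Set.inter_subset_left
    -- lower bound for the integral over Am m
    have h1 : ENNReal.ofReal (t * m) * μ (Am m) ≤
        ∫⁻ ω in Am m, (Zt f hfin U p' N ω : ℝ≥0∞) ∂μ := by
      rw [← setLIntegral_const (Am m) (ENNReal.ofReal (t * m))]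
      apply setLIntegral_mono (Measurable.comp measurable_from_top
        (measurable_Zt hUmeas p' N))
      intro ω hω
      have : t * (m : ℝ) < (Zt f hfin U p' N ω : ℝ) := hω.2
      calc ENNReal.ofReal (t * m) ≤ ENNReal.ofReal ((Zt f hfin U p' N ω : ℝ)) :=
            ENNReal.ofReal_le_ofReal this.le
        _ = ((Zt f hfin U p' N ω : ℕ) : ℝ≥0∞) := ENNReal.ofReal_natCast _
    have h2 : ∫⁻ ω in Am m, (Zt f hfin U p' N ω : ℝ≥0∞) ∂μ ≤
        ∫⁻ ω in {ω | Zt f hfin U p N ω = m}, (Zt f hfin U p' N ω : ℝ≥0∞) ∂μ :=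
      lintegral_mono_set hsubm
    have h3 : ∫⁻ ω in {ω | Zt f hfin U p N ω = m}, (Zt f hfin U p' N ω : ℝ≥0∞) ∂μ =
        ∑ S ∈ pathsN f hfin N, μ (OpC f U p' N S ∩ {ω | Zt f hfin U p N ω = m}) :=
      setLintegral_Zt hUmeas p' N (hZm_meas m)
    have h4 : ∑ S ∈ pathsN f hfin N, μ (OpC f U p' N S ∩ {ω | Zt f hfin U p N ω = m}) =
        ENNReal.ofReal c *
          ∑ S ∈ pathsN f hfin N, μ (OpC f U p N S ∩ {ω | Zt f hfin U p N ω = m}) := by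
      rw [Finset.mul_sum]
      apply Finset.sum_congr rfl
      intro S _
      rw [keyS hUmeas hUunif hUindep hf0 hp'0.le hp'p hp1 N S m,
        keyS hUmeas hUunif hUindep hf0 hp0.le (le_refl p) hp1 N S m]
      rw [← mul_assoc, ← ENNReal.ofReal_mul hc0]
      congr 2
      rw [Finset.prod_mul_distrib, Finset.prod_mul_distrib, Finset.prod_const,
        Finset.prod_const]
      simp only [Finset.card_univ, Fintype.card_fin]
      rw [hc]
      field_simp
      rw [div_pow, mul_assoc _ (p' ^ N / p ^ N), div_mul_cancel₀ _ (pow_ne_zero N hp0.ne')]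
    have h5 : ∑ S ∈ pathsN f hfin N, μ (OpC f U p N S ∩ {ω | Zt f hfin U p N ω = m}) =
        (m : ℝ≥0∞) * μ {ω | Zt f hfin U p N ω = m} := by
      rw [← setLintegral_Zt hUmeas p N (hZm_meas m)]
      rw [setLIntegral_congr_fun (hZm_meas m)
        (fun ω hω => by rw [hω])]
      rw [setLIntegral_const]
    have hchain : ENNReal.ofReal (t * m) * μ (Am m) ≤
        ENNReal.ofReal c * ((m : ℝ≥0∞) * μ {ω | Zt f hfin U p N ω = m}) := by
      calc ENNReal.ofReal (t * m) * μ (Am m) ≤ _ := h1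
        _ ≤ _ := h2
        _ = _ := h3
        _ = _ := h4
        _ = ENNReal.ofReal c * ((m : ℝ≥0∞) * μ {ω | Zt f hfin U p N ω = m}) := by rw [h5]
    -- cancel
    have hfac : ENNReal.ofReal (t * m) = ENNReal.ofReal t * (m : ℝ≥0∞) := by
      rw [ENNReal.ofReal_mul ht.le, ENNReal.ofReal_natCast]
    have htne : ENNReal.ofReal t ≠ 0 := by
      simp [ENNReal.ofReal_eq_zero, not_le, ht]
    have httop : ENNReal.ofReal t ≠ ⊤ := ENNReal.ofReal_ne_top
    rw [hfac] at hchain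
    have key : ENNReal.ofReal t * ((m : ℝ≥0∞) * μ (Am m)) ≤
        ENNReal.ofReal t * ((m : ℝ≥0∞) *
          (ENNReal.ofReal (c / t) * μ {ω | Zt f hfin U p N ω = m})) := by
      have hrt : ENNReal.ofReal t * ((m : ℝ≥0∞) *
          (ENNReal.ofReal (c / t) * μ {ω | Zt f hfin U p N ω = m})) =
          ENNReal.ofReal c * ((m : ℝ≥0∞) * μ {ω | Zt f hfin U p N ω = m}) := by
        have : ENNReal.ofReal t * ENNReal.ofReal (c / t) = ENNReal.ofReal c := by
          rw [← ENNReal.ofReal_mul ht.le, mul_div_cancel₀ c ht.ne']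
        calc ENNReal.ofReal t * ((m : ℝ≥0∞) *
              (ENNReal.ofReal (c / t) * μ {ω | Zt f hfin U p N ω = m}))
            = (ENNReal.ofReal t * ENNReal.ofReal (c / t)) *
              ((m : ℝ≥0∞) * μ {ω | Zt f hfin U p N ω = m}) := by ring
          _ = ENNReal.ofReal c * ((m : ℝ≥0∞) * μ {ω | Zt f hfin U p N ω = m}) := by
              rw [this]
      rw [hrt]
      calc ENNReal.ofReal t * ((m : ℝ≥0∞) * μ (Am m))
          = ENNReal.ofReal t * (m : ℝ≥0∞) * μ (Am m) := by ring
        _ ≤ _ := hchain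
    have := (ENNReal.mul_le_mul_iff_right htne httop).mp key
    exact (ENNReal.mul_le_mul_iff_right hmne hmtop).mp this
  -- Step 3: sum up
  calc μ {ω | t * (Zt f hfin U p N ω : ℝ) < (Zt f hfin U p' N ω : ℝ)}
      ≤ μ (⋃ m ∈ Finset.Icc 1 Mc, Am m) := measure_mono hcover
    _ ≤ ∑ m ∈ Finset.Icc 1 Mc, μ (Am m) := measure_biUnion_finset_le _ _
    _ ≤ ∑ m ∈ Finset.Icc 1 Mc, ENNReal.ofReal (c / t) *
          μ {ω | Zt f hfin U p N ω = m} := Finset.sum_le_sum hperm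
    _ = ENNReal.ofReal (c / t) *
          ∑ m ∈ Finset.Icc 1 Mc, μ {ω | Zt f hfin U p N ω = m} := by
        rw [Finset.mul_sum]
    _ ≤ ENNReal.ofReal (c / t) * 1 := by
        apply mul_le_mul_right
        have hdisj : (Finset.Icc 1 Mc : Set ℕ).PairwiseDisjoint
            (fun m => {ω | Zt f hfin U p N ω = m}) := by
          intro a _ b _ hab
          apply Set.disjoint_left.2
          intro ω ha hb
          exact hab (by rw [← ha, ← hb])
        rw [← measure_biUnion_finset hdisj (fun m _ => hZm_meas m)]
        exact measure_mono (Set.subset_univ _) |>.trans (le_of_eq (measure_univ))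
    _ = ENNReal.ofReal (c / t) := mul_one _

end Stmt7
namespace Stmt7

open MeasureTheory ProbabilityTheory Filter
open scoped ENNReal

variable {Ω : Type} [MeasurableSpace Ω] {d : ℕ}
  {μ : Measure Ω} [IsProbabilityMeasure μ]
  {f : Zd d → ℝ} {hfin : (Function.support f).Finite}
  {U : ℕ → Zd d → Zd d → Ω → ℝ}

/-- The good set: edges with zero weight are never open. -/
def Gset (f : Zd d → ℝ) (U : ℕ → Zd d → Zd d → Ω → ℝ) : Set Ω :=
  {ω | ∀ n x y, f (y - x) = 0 → ¬(U n x y ω ≤ 0)}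

lemma measurableSet_Gset (hUmeas : ∀ n x y, Measurable (U n x y)) :
    MeasurableSet (Gset f U) := by
  have : Gset f U = ⋂ (n : ℕ) (x : Zd d) (y : Zd d),
      {ω | f (y - x) = 0 → ¬(U n x y ω ≤ 0)} := by
    ext ω; simp [Gset]
  rw [this]
  refine MeasurableSet.iInter fun n => MeasurableSet.iInter fun x =>
    MeasurableSet.iInter fun y => ?_
  by_cases h : f (y - x) = 0
  · have : {ω : Ω | f (y - x) = 0 → ¬(U n x y ω ≤ 0)} = {ω | ¬(U n x y ω ≤ 0)} := by
      ext ω; simp [h]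
    rw [this]
    exact ((hUmeas n x y) measurableSet_Iic).compl
  · have : {ω : Ω | f (y - x) = 0 → ¬(U n x y ω ≤ 0)} = Set.univ := by
      ext ω; simp [h]
    rw [this]; exact MeasurableSet.univ

lemma meas_Gset_compl (hUmeas : ∀ n x y, Measurable (U n x y))
    (hUunif : ∀ n x y, μ.map (U n x y) = (volume : Measure ℝ).restrict (Set.Icc 0 1)) :
    μ (Gset f U)ᶜ = 0 := by
  classical
  set Se : ℕ × Zd d × Zd d → Set Ω := fun e =>
    if f (e.2.2 - e.2.1) = 0 then {ω | U e.1 e.2.1 e.2.2 ω ≤ 0} else ∅ with hSe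
  have hsub : (Gset f U)ᶜ ⊆ ⋃ e : ℕ × Zd d × Zd d, Se e := by
    intro ω hω
    simp only [Gset, Set.mem_compl_iff, Set.mem_setOf_eq, not_forall] at hω
    obtain ⟨n, x, y, hfz, hU⟩ := hω
    refine Set.mem_iUnion.2 ⟨(n, x, y), ?_⟩
    rw [hSe]
    simp only [hfz, if_true]
    exact not_not.mp hU
  apply measure_mono_null hsub
  apply measure_iUnion_null
  intro e
  rw [hSe]
  by_cases h : f (e.2.2 - e.2.1) = 0
  · simp only [h, if_true]
    have := measUle (μ := μ) hUmeas hUunif e.1 e.2.1 e.2.2 (le_refl (0:ℝ)) zero_le_one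
    simpa using this
  · simp [h]

lemma pathCount_eq_Zt (hω : (ω : Ω) ∈ Gset f U) (q : ℝ) (N : ℕ) :
    pathCount d N (coupledEnv d f U q ω) = Zt f hfin U q N ω := by
  classical
  have hiff : ∀ S : Fin (N + 1) → Zd d,
      (S 0 = 0 ∧ ∀ i : Fin N, coupledEnv d f U q ω i (S i.castSucc) (S i.succ) = true) ↔
      (S ∈ (pathsN f hfin N).filter (fun S => ω ∈ OpC f U q N S)) := by
    intro S
    rw [Finset.mem_filter]
    constructor
    · rintro ⟨h0, hop⟩
      have hop' : ∀ i : Fin N,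
          U i (S i.castSucc) (S i.succ) ω ≤ f (S i.succ - S i.castSucc) * q := by
        intro i
        have := hop i
        rwa [coupledEnv, decide_eq_true_eq] at this
      refine ⟨mem_pathsN.2 ⟨h0, fun i => ?_⟩, fun i => hop' i⟩
      intro hzero
      have h2 := hop' i
      rw [hzero, zero_mul] at h2
      exact hω i (S i.castSucc) (S i.succ) hzero h2
    · rintro ⟨hS, hop⟩
      refine ⟨(mem_pathsN.1 hS).1, fun i => ?_⟩
      rw [coupledEnv, decide_eq_true_eq]
      exact hop i
  rw [pathCount]
  rw [Nat.card_congr (Equiv.subtypeEquivRight hiff)]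
  rw [Nat.card_eq_finsetCard]
  rw [Zt, Finset.card_filter]
  apply Finset.sum_congr rfl
  intro S _
  simp [Set.indicator_apply]

lemma one_le_Zt (hω : (ω : Ω) ∈ Gset f U) {q : ℝ}
    (hperc : coupledEnv d f U q ω ∈ percEvent d) (N : ℕ) :
    1 ≤ Zt f hfin U q N ω := by
  classical
  obtain ⟨S, hS0, hSop⟩ := hperc
  set S' : Fin (N + 1) → Zd d := fun j => S (j : ℕ) with hS'
  have hop' : ∀ i : Fin N,
      U i (S' i.castSucc) (S' i.succ) ω ≤ f (S' i.succ - S' i.castSucc) * q := by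
    intro i
    have := hSop (i : ℕ)
    rw [coupledEnv, decide_eq_true_eq] at this
    exact this
  have hmem : S' ∈ pathsN f hfin N := by
    refine mem_pathsN.2 ⟨hS0, fun i => ?_⟩
    intro hzero
    have h2 := hop' i
    rw [hzero, zero_mul] at h2
    exact hω i (S' i.castSucc) (S' i.succ) hzero h2
  have hopmem : ω ∈ OpC f U q N S' := fun i => hop' i
  have hkey := Finset.single_le_sum
    (f := fun S => Set.indicator (OpC f U q N S) (fun _ => (1:ℕ)) ω)
    (fun _ _ => Nat.zero_le _) hmem
  calc (1 : ℕ) = Set.indicator (OpC f U q N S') (fun _ => (1:ℕ)) ω :=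
        (Set.indicator_of_mem hopmem (fun _ => (1:ℕ))).symm
    _ ≤ Zt f hfin U q N ω := hkey

end Stmt7
namespace Stmt7

open MeasureTheory ProbabilityTheory Filter
open scoped ENNReal

variable {Ω : Type} [MeasurableSpace Ω] {d : ℕ}
  {μ : Measure Ω} [IsProbabilityMeasure μ]
  {f : Zd d → ℝ} {hfin : (Function.support f).Finite}
  {U : ℕ → Zd d → Zd d → Ω → ℝ}

lemma bcLemma (hUmeas : ∀ n x y, Measurable (U n x y))
    (hUunif : ∀ n x y, μ.map (U n x y) = (volume : Measure ℝ).restrict (Set.Icc 0 1))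
    (hUindep : iIndepFun
      (fun e : ℕ × Zd d × Zd d => U e.1 e.2.1 e.2.2) μ)
    (hf0 : ∀ z, 0 ≤ f z) {p' p : ℝ} (hp'0 : 0 < p') (hp'p : p' ≤ p)
    (hp1 : ∀ z, f z * p ≤ 1) {θ : ℝ} (hθ : p' / p < θ) :
    ∀ᵐ ω ∂μ, ∀ᶠ N in atTop,
      (Zt f hfin U p' N ω : ℝ) ≤ θ ^ N * (Zt f hfin U p N ω : ℝ) := by
  have hp0 : 0 < p := lt_of_lt_of_le hp'0 hp'p
  have hr0 : 0 < p' / p := div_pos hp'0 hp0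
  have hθ0 : 0 < θ := lt_trans hr0 hθ
  set s : ℕ → Set Ω := fun N =>
    {ω | θ ^ N * (Zt f hfin U p N ω : ℝ) < (Zt f hfin U p' N ω : ℝ)} with hs
  set r : ℝ := (p' / p) / θ with hrdef
  have hrnn : 0 ≤ r := div_nonneg hr0.le hθ0.le
  have hr1 : r < 1 := (div_lt_one hθ0).2 hθ
  have hbound : ∀ N, μ (s N) ≤ ENNReal.ofReal (r ^ N) := by
    intro N
    have := keyEstimate (μ := μ) (hfin := hfin) hUmeas hUunif hUindep hf0 hp'0 hp'p hp1
      (pow_pos hθ0 N) N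
    calc μ (s N) ≤ ENNReal.ofReal ((p' / p) ^ N / θ ^ N) := this
      _ = ENNReal.ofReal (r ^ N) := by rw [hrdef]; congr 1; simp [div_pow]
  have hsum : (∑' N, μ (s N)) ≠ ⊤ := by
    have hle : (∑' N, μ (s N)) ≤ ∑' N, (ENNReal.ofReal r) ^ N := by
      apply ENNReal.tsum_le_tsum
      intro N
      rw [← ENNReal.ofReal_pow hrnn]
      exact hbound N
    have hgeo : (∑' N, (ENNReal.ofReal r) ^ N) ≠ ⊤ := by
      rw [ENNReal.tsum_geometric]
      apply ENNReal.inv_ne_top.2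
      rw [ne_eq, tsub_eq_zero_iff_le, not_le]
      exact ENNReal.ofReal_lt_one.2 hr1
    exact ne_top_of_le_ne_top hgeo hle
  filter_upwards [ae_eventually_notMem hsum] with ω hω
  filter_upwards [hω] with N hN
  exact not_lt.mp hN

lemma growth_eq {ω : Ω} (hω : ω ∈ Gset f U) (q : ℝ) (N : ℕ)
    (hZ : 1 ≤ Zt f hfin U q N ω) :
    growthTerm d (coupledEnv d f U q ω) N =
      ((Real.log (Zt f hfin U q N ω) / N : ℝ) : EReal) := by
  rw [growthTerm, pathCount_eq_Zt hω q N, if_neg (by omega)]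

end Stmt7
open Stmt7 in
/-- The function `p ↦ F(p) - log p` is non-decreasing on `(0, p_max]`,
where `F(p)` is the a.s. value of `limsup N⁻¹ log Z_N` on the percolation event,
and `⊥` when percolation does not occur. -/
theorem stmt7 {Ω : Type} [MeasurableSpace Ω] (μ : Measure Ω) [IsProbabilityMeasure μ]
    (d : ℕ) (f : Zd d → ℝ) (hf0 : ∀ z, 0 ≤ f z)
    (hfin : (Function.support f).Finite) (hsum : ∑ᶠ z, f z = 1)
    (U : ℕ → Zd d → Zd d → Ω → ℝ)
    (hUmeas : ∀ n x y, Measurable (U n x y))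
    (hUindep : iIndepFun
      (fun e : ℕ × Zd d × Zd d => U e.1 e.2.1 e.2.2) μ)
    (hUunif : ∀ n x y, μ.map (U n x y) = (volume : Measure ℝ).restrict (Set.Icc 0 1))
    (F : ℝ → EReal)
    (hF : ∀ q : ℝ, 0 < q → (∀ z, q * f z ≤ 1) →
      (μ ((coupledEnv d f U q) ⁻¹' percEvent d) = 0 → F q = ⊥) ∧
      (0 < μ ((coupledEnv d f U q) ⁻¹' percEvent d) →
        ∀ᵐ ω ∂(μ[|(coupledEnv d f U q) ⁻¹' percEvent d]),
          Filter.limsup (growthTerm d (coupledEnv d f U q ω)) atTop = F q)) :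
    ∀ p' p : ℝ, 0 < p' → p' ≤ p → (∀ z, p * f z ≤ 1) →
      F p' - (Real.log p' : EReal) ≤ F p - (Real.log p : EReal) := by
  intro p' p hp'0 hp'p hp1
  have hp0 : 0 < p := lt_of_lt_of_le hp'0 hp'p
  have hp1' : ∀ z, f z * p ≤ 1 := fun z => by rw [mul_comm]; exact hp1 z
  have hp'1 : ∀ z, p' * f z ≤ 1 := fun z =>
    le_trans (mul_le_mul_of_nonneg_right hp'p (hf0 z)) (hp1 z)
  obtain ⟨hA', hB'⟩ := hF p' hp'0 hp'1
  obtain ⟨hA, hB⟩ := hF p hp0 hp1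
  set pre' := (coupledEnv d f U p') ⁻¹' percEvent d with hpre'def
  set prep := (coupledEnv d f U p) ⁻¹' percEvent d with hprepdef
  rcases eq_or_ne (μ pre') 0 with h0 | hne
  · rw [hA' h0, EReal.bot_sub]
    exact bot_le
  · have hpos' : 0 < μ pre' := pos_iff_ne_zero.mpr hne
    have hsubperc : pre' ⊆ prep := by
      intro ω hω
      obtain ⟨S, hS0, hSop⟩ := hω
      refine ⟨S, hS0, fun n => ?_⟩
      have hh := hSop n
      rw [coupledEnv, decide_eq_true_eq] at hh
      show decide (U n (S n) (S (n+1)) ω ≤ f (S (n+1) - S n) * p) = true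
      rw [decide_eq_true_eq]
      exact le_trans hh (mul_le_mul_of_nonneg_left hp'p (hf0 _))
    have hpos : 0 < μ prep := lt_of_lt_of_le hpos' (measure_mono hsubperc)
    have hae' := hB' hpos'
    have hae := hB hpos
    -- the sequence of slopes
    set θ : ℕ → ℝ := fun k => (p' / p) * (1 + 1 / ((k : ℝ) + 1)) with hθdef
    have hr0 : 0 < p' / p := div_pos hp'0 hp0
    have hθgt : ∀ k, p' / p < θ k := by
      intro k
      have h1 : (0:ℝ) < 1 / ((k:ℝ) + 1) := by positivity
      rw [hθdef]
      nlinarith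
    have hθ0 : ∀ k, 0 < θ k := fun k => lt_trans hr0 (hθgt k)
    have hbc : ∀ k : ℕ, ∀ᵐ ω ∂μ, ∀ᶠ N in atTop,
        (Zt f hfin U p' N ω : ℝ) ≤ (θ k) ^ N * (Zt f hfin U p N ω : ℝ) := fun k =>
      bcLemma hUmeas hUunif hUindep hf0 hp'0 hp'p hp1' (hθgt k)
    -- the bad sets
    set B1 : Set Ω := {ω | ¬ (Filter.limsup (growthTerm d (coupledEnv d f U p' ω)) atTop
      = F p')} with hB1def
    set B2 : Set Ω := {ω | ¬ (Filter.limsup (growthTerm d (coupledEnv d f U p ω)) atTop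
      = F p)} with hB2def
    set Bk : ℕ → Set Ω := fun k => {ω | ¬ ∀ᶠ N in atTop,
      (Zt f hfin U p' N ω : ℝ) ≤ (θ k) ^ N * (Zt f hfin U p N ω : ℝ)} with hBkdef
    set B5 : Set Ω := {ω | ¬ ∀ N, 1 ≤ Zt f hfin U p' N ω} with hB5def
    set ν : Measure Ω := μ.restrict pre' with hνdef
    have hν1 : ν B1 = 0 := by
      have h := ae_iff.mp hae'
      rw [ProbabilityTheory.cond, Measure.smul_apply, smul_eq_mul] at h
      rcases mul_eq_zero.mp h with h | h
      · exact absurd (ENNReal.inv_eq_zero.mp h) (measure_ne_top μ pre')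
      · exact h
    have hν2 : ν B2 = 0 := by
      have h := ae_iff.mp hae
      rw [ProbabilityTheory.cond, Measure.smul_apply, smul_eq_mul] at h
      rcases mul_eq_zero.mp h with h | h
      · exact absurd (ENNReal.inv_eq_zero.mp h) (measure_ne_top μ prep)
      · refine le_antisymm ?_ zero_le
        calc ν B2 ≤ μ.restrict prep B2 :=
              Measure.le_iff'.1 (Measure.restrict_mono hsubperc le_rfl) B2
          _ = 0 := h
    have hν3 : ν (Gset f U)ᶜ = 0 := by
      have h := meas_Gset_compl (μ := μ) (f := f) hUmeas hUunif
      refine le_antisymm ?_ zero_le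
      calc ν (Gset f U)ᶜ ≤ μ (Gset f U)ᶜ := Measure.le_iff'.1 Measure.restrict_le_self _
        _ = 0 := h
    have hν4 : ν (⋃ k, Bk k) = 0 := by
      have hμ : μ (⋃ k, Bk k) = 0 := measure_iUnion_null fun k => ae_iff.mp (hbc k)
      refine le_antisymm ?_ zero_le
      calc ν (⋃ k, Bk k) ≤ μ (⋃ k, Bk k) := Measure.le_iff'.1 Measure.restrict_le_self _
        _ = 0 := hμ
    have hB5meas : MeasurableSet B5 := by
      have : B5 = (⋂ N, {ω | 1 ≤ Zt f hfin U p' N ω})ᶜ := by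
        ext ω; simp [hB5def]
      rw [this]
      exact (MeasurableSet.iInter fun N =>
        (measurable_Zt hUmeas p' N) (MeasurableSpace.measurableSet_top)).compl
    have hν5 : ν B5 = 0 := by
      rw [hνdef, Measure.restrict_apply hB5meas]
      apply measure_mono_null (t := (Gset f U)ᶜ) ?_ (meas_Gset_compl hUmeas hUunif)
      rintro ω ⟨hb5, hpre⟩
      intro hG
      exact hb5 (fun N => one_le_Zt hG hpre N)
    -- find a good sample point
    have hbig : ν (B1 ∪ B2 ∪ (Gset f U)ᶜ ∪ (⋃ k, Bk k) ∪ B5) = 0 :=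
      measure_union_null (measure_union_null (measure_union_null
        (measure_union_null hν1 hν2) hν3) hν4) hν5
    have hex : ∃ ω, ω ∉ B1 ∪ B2 ∪ (Gset f U)ᶜ ∪ (⋃ k, Bk k) ∪ B5 := by
      by_contra h
      push_neg at h
      have hsub : Set.univ ⊆ B1 ∪ B2 ∪ (Gset f U)ᶜ ∪ (⋃ k, Bk k) ∪ B5 := fun ω _ => h ω
      have : ν Set.univ = 0 :=
        le_antisymm (le_trans (measure_mono hsub) (le_of_eq hbig)) zero_le
      rw [hνdef, Measure.restrict_apply_univ] at this
      exact hne this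
    obtain ⟨ω, hω⟩ := hex
    simp only [Set.mem_union, not_or] at hω
    obtain ⟨⟨⟨⟨h1, h2⟩, h3⟩, h4⟩, h5⟩ := hω
    have hlim' : Filter.limsup (growthTerm d (coupledEnv d f U p' ω)) atTop = F p' :=
      not_not.mp h1
    have hlim : Filter.limsup (growthTerm d (coupledEnv d f U p ω)) atTop = F p :=
      not_not.mp h2
    have hG : ω ∈ Gset f U := not_not.mp h3
    have hbcω : ∀ k, ∀ᶠ N in atTop,
        (Zt f hfin U p' N ω : ℝ) ≤ (θ k) ^ N * (Zt f hfin U p N ω : ℝ) :=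
      fun k => not_not.mp (fun hc => h4 (Set.mem_iUnion.2 ⟨k, hc⟩))
    have hZ1 : ∀ N, 1 ≤ Zt f hfin U p' N ω := not_not.mp h5
    have hZle : ∀ N, Zt f hfin U p' N ω ≤ Zt f hfin U p N ω :=
      fun N => Zt_mono hf0 hp'p N ω
    have hZp1 : ∀ N, 1 ≤ Zt f hfin U p N ω := fun N => le_trans (hZ1 N) (hZle N)
    -- real sequences
    set a : ℕ → ℝ := fun N => Real.log (Zt f hfin U p' N ω) / N with hadef
    set b : ℕ → ℝ := fun N => Real.log (Zt f hfin U p N ω) / N with hbdef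
    have hga : ∀ N, growthTerm d (coupledEnv d f U p' ω) N = ((a N : ℝ) : EReal) :=
      fun N => growth_eq hG p' N (hZ1 N)
    have hgb : ∀ N, growthTerm d (coupledEnv d f U p ω) N = ((b N : ℝ) : EReal) :=
      fun N => growth_eq hG p N (hZp1 N)
    -- bounds
    set KR : ℝ := (hfin.toFinset.card : ℝ) with hKRdef
    have hsupp : (Function.support f).Nonempty := by
      rcases Set.eq_empty_or_nonempty (Function.support f) with h | h
      · exfalso
        have hf : f = 0 := Function.support_eq_empty_iff.mp h
        rw [hf] at hsum
        simp at hsum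
      · exact h
    have hKR1 : (1:ℝ) ≤ KR := by
      rw [hKRdef]
      have : 0 < hfin.toFinset.card :=
        Finset.card_pos.mpr (Set.Finite.toFinset_nonempty hfin |>.mpr hsupp)
      exact_mod_cast this
    have hcard : ∀ (q : ℝ) (N : ℕ), (Zt f hfin U q N ω : ℝ) ≤ KR ^ N := by
      intro q N
      have h1 : Zt f hfin U q N ω ≤ hfin.toFinset.card ^ N :=
        le_trans (Zt_le_card q N ω) card_pathsN_le
      rw [hKRdef]
      exact_mod_cast h1
    have hb0 : ∀ N, 0 ≤ b N := fun N =>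
      div_nonneg (Real.log_nonneg (by exact_mod_cast hZp1 N)) (Nat.cast_nonneg N)
    have ha0 : ∀ N, 0 ≤ a N := fun N =>
      div_nonneg (Real.log_nonneg (by exact_mod_cast hZ1 N)) (Nat.cast_nonneg N)
    have hbound : ∀ (q : ℝ) (N : ℕ), (1:ℕ) ≤ Zt f hfin U q N ω →
        Real.log (Zt f hfin U q N ω) / N ≤ Real.log KR := by
      intro q N hZq
      rcases Nat.eq_zero_or_pos N with h | h
      · subst h
        simp only [Nat.cast_zero, div_zero]
        exact Real.log_nonneg hKR1
      · have hNpos : (0:ℝ) < N := by exact_mod_cast h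
        have hZpos : (0:ℝ) < (Zt f hfin U q N ω : ℝ) := by exact_mod_cast hZq
        rw [div_le_iff₀ hNpos]
        calc Real.log (Zt f hfin U q N ω) ≤ Real.log (KR ^ N) :=
              Real.log_le_log hZpos (hcard q N)
          _ = (N : ℝ) * Real.log KR := by rw [Real.log_pow]
          _ = Real.log KR * N := mul_comm _ _
    have hbK : ∀ N, b N ≤ Real.log KR := fun N => hbound p N (hZp1 N)
    have haK : ∀ N, a N ≤ Real.log KR := fun N => hbound p' N (hZ1 N)
    -- F p and F p' are finite
    have hFp_le : F p ≤ (Real.log KR : EReal) := by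
      rw [← hlim]
      exact Filter.limsup_le_of_le (by isBoundedDefault)
        (Filter.Eventually.of_forall fun N => by
          rw [hgb N]; exact EReal.coe_le_coe_iff.mpr (hbK N))
    have hFp_ge : (0 : EReal) ≤ F p := by
      rw [← hlim]
      exact Filter.le_limsup_of_frequently_le'
        (Filter.Frequently.of_forall fun N => by
          rw [hgb N]; exact_mod_cast hb0 N)
    have hFp'_le : F p' ≤ (Real.log KR : EReal) := by
      rw [← hlim']
      exact Filter.limsup_le_of_le (by isBoundedDefault)
        (Filter.Eventually.of_forall fun N => by
          rw [hga N]; exact EReal.coe_le_coe_iff.mpr (haK N))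
    have hFp'_ge : (0 : EReal) ≤ F p' := by
      rw [← hlim']
      exact Filter.le_limsup_of_frequently_le'
        (Filter.Frequently.of_forall fun N => by
          rw [hga N]; exact_mod_cast ha0 N)
    have hbot0 : (⊥ : EReal) < 0 := by
      rw [show (0 : EReal) = ((0:ℝ) : EReal) from rfl]
      exact EReal.bot_lt_coe 0
    have hFpt : F p ≠ ⊤ := (lt_of_le_of_lt hFp_le (EReal.coe_lt_top _)).ne
    have hFpb : F p ≠ ⊥ := (lt_of_lt_of_le hbot0 hFp_ge).ne'
    have hFp't : F p' ≠ ⊤ := (lt_of_le_of_lt hFp'_le (EReal.coe_lt_top _)).ne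
    have hFp'b : F p' ≠ ⊥ := (lt_of_lt_of_le hbot0 hFp'_ge).ne'
    set l : ℝ := (F p).toReal with hldef
    set l' : ℝ := (F p').toReal with hl'def
    have hFpcoe : ((l : ℝ) : EReal) = F p := EReal.coe_toReal hFpt hFpb
    have hFp'coe : ((l' : ℝ) : EReal) = F p' := EReal.coe_toReal hFp't hFp'b
    -- the main estimate
    have hδ : ∀ δ : ℝ, 0 < δ → l' ≤ Real.log (p' / p) + l + δ := by
      intro δ hδpos
      obtain ⟨k, hk⟩ := exists_nat_one_div_lt (half_pos hδpos)
      have hθklog : Real.log (θ k) ≤ Real.log (p' / p) + δ / 2 := by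
        have hx : (0:ℝ) < 1 + 1 / ((k:ℝ) + 1) := by positivity
        have hlog2 := Real.log_le_sub_one_of_pos hx
        have hmul : Real.log (θ k) =
            Real.log (p' / p) + Real.log (1 + 1 / ((k:ℝ) + 1)) := by
          rw [hθdef]
          exact Real.log_mul hr0.ne' hx.ne'
        rw [hmul]
        have : (1:ℝ) / ((k:ℝ) + 1) < δ / 2 := hk
        linarith
      have hblt : ∀ᶠ N in atTop,
          growthTerm d (coupledEnv d f U p ω) N < ((l + δ / 2 : ℝ) : EReal) := by
        refine Filter.eventually_lt_of_limsup_lt ?_ (by isBoundedDefault)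
        rw [hlim, ← hFpcoe]
        exact EReal.coe_lt_coe_iff.mpr (by linarith)
      have hev : ∀ᶠ N in atTop, growthTerm d (coupledEnv d f U p' ω) N ≤
          ((Real.log (p' / p) + δ / 2 + (l + δ / 2) : ℝ) : EReal) := by
        filter_upwards [hbcω k, hblt, Filter.eventually_ge_atTop 1] with N hc1 hc2 hc3
        rw [hga N]
        rw [hgb N] at hc2
        have hbN : b N < l + δ / 2 := EReal.coe_lt_coe_iff.mp hc2
        have hZ'pos : (0:ℝ) < (Zt f hfin U p' N ω : ℝ) := by exact_mod_cast hZ1 N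
        have hZpos : (0:ℝ) < (Zt f hfin U p N ω : ℝ) := by exact_mod_cast hZp1 N
        have hNpos : (0:ℝ) < (N : ℝ) := by exact_mod_cast hc3
        have hlog : Real.log (Zt f hfin U p' N ω) ≤
            (N : ℝ) * Real.log (θ k) + Real.log (Zt f hfin U p N ω) := by
          calc Real.log (Zt f hfin U p' N ω)
              ≤ Real.log ((θ k) ^ N * (Zt f hfin U p N ω : ℝ)) :=
                Real.log_le_log hZ'pos hc1
            _ = (N : ℝ) * Real.log (θ k) + Real.log (Zt f hfin U p N ω) := by
                rw [Real.log_mul (pow_ne_zero N (hθ0 k).ne') hZpos.ne', Real.log_pow]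
        have haN : a N ≤ Real.log (θ k) + b N := by
          have hstep := (div_le_div_iff_of_pos_right hNpos).mpr hlog
          have heq : ((N : ℝ) * Real.log (θ k) + Real.log (Zt f hfin U p N ω)) / N =
              Real.log (θ k) + Real.log (Zt f hfin U p N ω) / N := by
            rw [add_div, mul_div_cancel_left₀ _ hNpos.ne']
          calc a N = Real.log (Zt f hfin U p' N ω) / N := rfl
            _ ≤ ((N : ℝ) * Real.log (θ k) + Real.log (Zt f hfin U p N ω)) / N := hstep
            _ = Real.log (θ k) + Real.log (Zt f hfin U p N ω) / N := heq
            _ = Real.log (θ k) + b N := rfl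
        have : a N ≤ Real.log (p' / p) + δ / 2 + (l + δ / 2) := by linarith
        exact EReal.coe_le_coe_iff.mpr this
      have hls := Filter.limsup_le_of_le (by isBoundedDefault) hev
      rw [hlim', ← hFp'coe] at hls
      have := EReal.coe_le_coe_iff.mp hls
      linarith
    have hmain : l' ≤ Real.log (p' / p) + l := by
      by_contra hcon
      push_neg at hcon
      have := hδ ((l' - (Real.log (p' / p) + l)) / 2) (by linarith)
      linarith
    rw [← hFp'coe, ← hFpcoe, ← EReal.coe_sub, ← EReal.coe_sub]
    apply EReal.coe_le_coe_iff.mpr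
    rw [Real.log_div hp'0.ne' hp0.ne'] at hmain
    linarith
end
end

section
/- Size-biasing identity: for any bounded measurable $F:\mathbb{R}\to\mathbb{R}$, $\mathbb{E}_p\otimes\mathbf{E}[F(\tilde Z_N)] = \mathbb{E}_p[W_N\, F(Z_N)]$, where $\tilde Z_N$ is the path count in the modified environment $\tilde X$ obtained from $X$ by forcing all edges along an independent random walk $T$ (with step law $f$) to be open. -/
open MeasureTheory ProbabilityTheory Filter

noncomputable section

namespace SB

variable {d : ℕ}

lemma meas_eval (n : ℕ) (x y : Zd d) : Measurable fun X : Env d => X n x y :=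
  (measurable_pi_apply y).comp ((measurable_pi_apply x).comp (measurable_pi_apply n))

/-- Environments where all `f`-null edges are closed. -/
def good (d : ℕ) (f : Zd d → ℝ) : Set (Env d) :=
  {X | ∀ n x y, f (y - x) = 0 → X n x y = false}

/-- Admissible paths. -/
def adm (d : ℕ) (f : Zd d → ℝ) (N : ℕ) : Set (Fin (N + 1) → Zd d) :=
  {T | T 0 = 0 ∧ ∀ i : Fin N, f (T i.succ - T i.castSucc) ≠ 0}

lemma recover {N : ℕ} (S S' : Fin (N + 1) → Zd d) (h0 : S 0 = S' 0)
    (h : ∀ i : Fin N, S i.succ - S i.castSucc = S' i.succ - S' i.castSucc) : S = S' := by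
  funext j
  obtain ⟨k, hk⟩ := j
  induction k with
  | zero =>
    have h00 : (⟨0, hk⟩ : Fin (N + 1)) = 0 := by ext; simp
    rw [h00]; exact h0
  | succ k ih =>
    have hkN : k < N := Nat.succ_lt_succ_iff.mp hk
    have hk' : k < N + 1 := Nat.lt_of_succ_lt hk
    have e1 : ((⟨k, hkN⟩ : Fin N)).succ = (⟨k + 1, hk⟩ : Fin (N + 1)) := rfl
    have e2 : ((⟨k, hkN⟩ : Fin N)).castSucc = (⟨k, hk'⟩ : Fin (N + 1)) := by ext; simp
    have hh := h ⟨k, hkN⟩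
    rw [e1, e2] at hh
    have ihk := ih hk'
    calc S ⟨k + 1, hk⟩ = (S ⟨k + 1, hk⟩ - S ⟨k, hk'⟩) + S ⟨k, hk'⟩ := by abel
      _ = (S' ⟨k + 1, hk⟩ - S' ⟨k, hk'⟩) + S' ⟨k, hk'⟩ := by rw [hh, ihk]
      _ = S' ⟨k + 1, hk⟩ := by abel

lemma adm_finite (d : ℕ) (f : Zd d → ℝ) (hfin : (Function.support f).Finite) (N : ℕ) :
    (adm d f N).Finite := by
  apply Set.Finite.of_finite_image
    (f := fun (S : Fin (N + 1) → Zd d) (i : Fin N) => S i.succ - S i.castSucc)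
  · apply (Set.Finite.pi fun _ : Fin N => hfin).subset
    rintro g ⟨S, hS, rfl⟩
    rw [Set.mem_pi]
    exact fun i _ => hS.2 i
  · rintro S hS S' hS' h
    exact recover S S' (hS.1.trans hS'.1.symm) fun i => congrFun h i

variable {N : ℕ} {f : Zd d → ℝ}

def ind (d N : ℕ) (T : Fin (N + 1) → Zd d) (X : Env d) : ℝ :=
  if (∀ i : Fin N, X i (T i.castSucc) (T i.succ) = true) then 1 else 0

def cntR (d N : ℕ) (P : Finset (Fin (N + 1) → Zd d)) (X : Env d) : ℝ :=
  ∑ S ∈ P, ind d N S X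

def edgeF (d N : ℕ) (T : Fin (N + 1) → Zd d) : Finset (ℕ × Zd d × Zd d) :=
  Finset.univ.image fun i : Fin N => ((i : ℕ), T i.castSucc, T i.succ)

def EA (d N : ℕ) (P : Finset (Fin (N + 1) → Zd d)) : Finset (ℕ × Zd d × Zd d) :=
  P.biUnion (edgeF d N)

lemma tilt_eq_of_open {T : Fin (N + 1) → Zd d} {X : Env d}
    (hop : ∀ i : Fin N, X i (T i.castSucc) (T i.succ) = true) :
    tiltEnv d N T X = X := by
  funext n x y
  unfold tiltEnv
  split
  · next h =>
    split
    · next hxy =>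
      obtain ⟨hx, hy⟩ := hxy
      have := hop ⟨n, h⟩
      have ec : (⟨n, h⟩ : Fin N).castSucc = (⟨n, Nat.lt_succ_of_lt h⟩ : Fin (N + 1)) := by ext; simp
      have es : (⟨n, h⟩ : Fin N).succ = (⟨n + 1, Nat.succ_lt_succ h⟩ : Fin (N + 1)) := rfl
      rw [ec, es, hx, hy] at this
      exact this.symm
    · rfl
  · rfl

lemma tilt_forced {T : Fin (N + 1) → Zd d} (X : Env d) (i : Fin N) :
    tiltEnv d N T X i (T i.castSucc) (T i.succ) = true := by
  have ec : (⟨(i : ℕ), Nat.lt_succ_of_lt i.isLt⟩ : Fin (N + 1)) = i.castSucc := by ext; simp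
  have es : (⟨(i : ℕ) + 1, Nat.succ_lt_succ i.isLt⟩ : Fin (N + 1)) = i.succ := rfl
  unfold tiltEnv
  rw [dif_pos i.isLt, if_pos ⟨by rw [ec], by rw [es]⟩]

lemma mem_edgeF_iff {T : Fin (N + 1) → Zd d} {e : ℕ × Zd d × Zd d} :
    e ∈ edgeF d N T ↔ ∃ i : Fin N, e = ((i : ℕ), T i.castSucc, T i.succ) := by
  simp [edgeF, eq_comm]

lemma tilt_unforced {T : Fin (N + 1) → Zd d} (X : Env d) {e : ℕ × Zd d × Zd d}
    (he : e ∉ edgeF d N T) :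
    tiltEnv d N T X e.1 e.2.1 e.2.2 = X e.1 e.2.1 e.2.2 := by
  obtain ⟨n, x, y⟩ := e
  unfold tiltEnv
  split
  · next h =>
    split
    · next hxy =>
      exfalso
      apply he
      rw [mem_edgeF_iff]
      refine ⟨⟨n, h⟩, ?_⟩
      obtain ⟨hx, hy⟩ := hxy
      have ec : (⟨n, h⟩ : Fin N).castSucc = (⟨n, Nat.lt_succ_of_lt h⟩ : Fin (N + 1)) := by ext; simp
      have es : (⟨n, h⟩ : Fin N).succ = (⟨n + 1, Nat.succ_lt_succ h⟩ : Fin (N + 1)) := rfl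
      simp only [ec, es, hx, hy]
    · rfl
  · rfl

lemma cntR_congr {P : Finset (Fin (N + 1) → Zd d)} {Y Z : Env d}
    (h : ∀ e ∈ EA d N P, Y e.1 e.2.1 e.2.2 = Z e.1 e.2.1 e.2.2) :
    cntR d N P Y = cntR d N P Z := by
  unfold cntR
  refine Finset.sum_congr rfl fun S hS => ?_
  unfold ind
  congr 1
  refine forall_congr fun i => ?_
  have : ((i : ℕ), S i.castSucc, S i.succ) ∈ EA d N P :=
    Finset.mem_biUnion.2 ⟨S, hS, mem_edgeF_iff.2 ⟨i, rfl⟩⟩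
  rw [h _ this]

lemma cntR_tilt_congr {P : Finset (Fin (N + 1) → Zd d)} {T : Fin (N + 1) → Zd d} {Y Z : Env d}
    (h : ∀ e ∈ EA d N P \ edgeF d N T, Y e.1 e.2.1 e.2.2 = Z e.1 e.2.1 e.2.2) :
    cntR d N P (tiltEnv d N T Y) = cntR d N P (tiltEnv d N T Z) := by
  refine cntR_congr fun e he => ?_
  by_cases hT : e ∈ edgeF d N T
  · obtain ⟨i, rfl⟩ := mem_edgeF_iff.1 hT
    rw [show ((((i : ℕ), T i.castSucc, T i.succ) : ℕ × Zd d × Zd d)).1 = (i : ℕ) from rfl]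
    rw [tilt_forced Y i, tilt_forced Z i]
  · rw [tilt_unforced Y hT, tilt_unforced Z hT, h e (Finset.mem_sdiff.2 ⟨he, hT⟩)]

lemma good_tilt {T : Fin (N + 1) → Zd d} {X : Env d} (hX : X ∈ good d f)
    (hT : T ∈ adm d f N) : tiltEnv d N T X ∈ good d f := by
  intro n x y hf0
  unfold tiltEnv
  split
  · next h =>
    split
    · next hxy =>
      exfalso
      obtain ⟨hx, hy⟩ := hxy
      have ec : (⟨n, h⟩ : Fin N).castSucc = (⟨n, Nat.lt_succ_of_lt h⟩ : Fin (N + 1)) := by ext; simp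
      have es : (⟨n, h⟩ : Fin N).succ = (⟨n + 1, Nat.succ_lt_succ h⟩ : Fin (N + 1)) := rfl
      apply hT.2 ⟨n, h⟩
      rw [ec, es, hx, hy]
      exact hf0
    · exact hX n x y hf0
  · exact hX n x y hf0

lemma pathCount_eq_cntR {P : Finset (Fin (N + 1) → Zd d)}
    (hP : ∀ S, S ∈ P ↔ S ∈ adm d f N) {X : Env d} (hX : X ∈ good d f) :
    (pathCount d N X : ℝ) = cntR d N P X := by
  classical
  have hiff : ∀ S : Fin (N + 1) → Zd d,
      (S 0 = 0 ∧ ∀ i : Fin N, X i (S i.castSucc) (S i.succ) = true) ↔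
      S ∈ P.filter fun S => ∀ i : Fin N, X i (S i.castSucc) (S i.succ) = true := by
    intro S
    rw [Finset.mem_filter, hP]
    constructor
    · rintro ⟨h0, hop⟩
      refine ⟨⟨h0, fun i hc => ?_⟩, hop⟩
      have := hX i (S i.castSucc) (S i.succ) hc
      rw [hop i] at this
      exact Bool.noConfusion this
    · rintro ⟨⟨h0, _⟩, hop⟩
      exact ⟨h0, hop⟩
  have h1 : pathCount d N X
      = Nat.card {S : Fin (N + 1) → Zd d //
          S ∈ P.filter fun S => ∀ i : Fin N, X i (S i.castSucc) (S i.succ) = true} :=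
    Nat.card_congr (Equiv.subtypeEquivRight hiff)
  rw [h1, Nat.card_eq_finsetCard, Finset.card_filter]
  unfold cntR ind
  push_cast [apply_ite (Nat.cast : ℕ → ℝ)]
  rfl

lemma meas_set_open (T : Fin (N + 1) → Zd d) :
    MeasurableSet {X : Env d | ∀ i : Fin N, X i (T i.castSucc) (T i.succ) = true} := by
  have : {X : Env d | ∀ i : Fin N, X i (T i.castSucc) (T i.succ) = true}
      = ⋂ i : Fin N, (fun X : Env d => X i (T i.castSucc) (T i.succ)) ⁻¹' {true} := by
    ext X; simp
  rw [this]
  exact MeasurableSet.iInter fun i => meas_eval _ _ _ (measurableSet_singleton true)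

lemma meas_ind (T : Fin (N + 1) → Zd d) : Measurable (ind d N T) := by
  classical
  unfold ind
  exact Measurable.ite (meas_set_open T) measurable_const measurable_const

lemma meas_cntR (P : Finset (Fin (N + 1) → Zd d)) : Measurable (cntR d N P) :=
  Finset.measurable_sum _ fun S _ => meas_ind S

lemma ae_good {p : ℝ} {μ : Measure (Env d)} [IsProbabilityMeasure μ]
    (henv2 : ∀ n x y, μ {X : Env d | X n x y = true} = ENNReal.ofReal (p * f (y - x))) :
    ∀ᵐ X ∂μ, X ∈ good d f := by
  rw [ae_iff]
  have hsub : {X : Env d | ¬ X ∈ good d f} ⊆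
      ⋃ e : ℕ × Zd d × Zd d,
        {X : Env d | f (e.2.2 - e.2.1) = 0 ∧ X e.1 e.2.1 e.2.2 = true} := by
    intro X hX
    simp only [good, Set.mem_setOf_eq, not_forall] at hX
    obtain ⟨n, x, y, hf0, hne⟩ := hX
    exact Set.mem_iUnion.2 ⟨(n, x, y), hf0, Bool.not_eq_false _ |>.mp hne⟩
  refine measure_mono_null hsub (measure_iUnion_null fun e => ?_)
  by_cases hf0 : f (e.2.2 - e.2.1) = 0
  · refine measure_mono_null (fun X hX => hX.2) ?_
    have h := henv2 e.1 e.2.1 e.2.2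
    rw [hf0, mul_zero] at h
    exact h.trans (by simp)
  · exact measure_mono_null (fun X hX => absurd hX.1 hf0) measure_empty

lemma meas_tilt (T : Fin (N + 1) → Zd d) : Measurable (tiltEnv d N T) := by
  refine measurable_pi_lambda _ fun n => measurable_pi_lambda _ fun x =>
    measurable_pi_lambda _ fun y => ?_
  unfold tiltEnv
  by_cases h : n < N
  · simp only [dif_pos h]
    by_cases hxy : T ⟨n, Nat.lt_succ_of_lt h⟩ = x ∧ T ⟨n + 1, Nat.succ_lt_succ h⟩ = y
    · simp only [if_pos hxy]; exact measurable_const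
    · simp only [if_neg hxy]; exact meas_eval n x y
  · simp only [dif_neg h]; exact meas_eval n x y

lemma meas_open_event {p : ℝ} {μ : Measure (Env d)} [IsProbabilityMeasure μ]
    (henv : bernoulliEnv d p f μ) (hp0 : 0 ≤ p) (hf0 : ∀ z, 0 ≤ f z)
    {T : Fin (N + 1) → Zd d} (hT0 : T 0 = 0) :
    (μ {X : Env d | ∀ i : Fin N, X i (T i.castSucc) (T i.succ) = true}).toReal
      = p ^ N * walkWeight d N f T := by
  have hev : {X : Env d | ∀ i : Fin N, X i (T i.castSucc) (T i.succ) = true}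
      = ⋂ e ∈ edgeF d N T, edgeVal d e ⁻¹' {true} := by
    ext X
    simp only [Set.mem_iInter, Set.mem_setOf_eq, Set.mem_preimage, Set.mem_singleton_iff]
    constructor
    · intro h e he
      obtain ⟨i, rfl⟩ := mem_edgeF_iff.1 he
      exact h i
    · intro h i
      exact h _ (mem_edgeF_iff.2 ⟨i, rfl⟩)
  rw [hev, henv.1.meas_biInter (fun e _ => ⟨{true}, trivial, rfl⟩)]
  have hmarg : ∀ e ∈ edgeF d N T,
      μ (edgeVal d e ⁻¹' {true}) = ENNReal.ofReal (p * f (e.2.2 - e.2.1)) :=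
    fun e _ => henv.2 e.1 e.2.1 e.2.2
  rw [Finset.prod_congr rfl hmarg]
  rw [edgeF, Finset.prod_image (fun i _ j _ hij => Fin.val_injective (congrArg Prod.fst hij))]
  rw [ENNReal.toReal_prod]
  rw [Finset.prod_congr rfl (fun (i : Fin N) _ =>
    ENNReal.toReal_ofReal (mul_nonneg hp0 (hf0 (T i.succ - T i.castSucc))))]
  rw [Finset.prod_mul_distrib, Finset.prod_const, Finset.card_univ, Fintype.card_fin,
    walkWeight, if_pos hT0]

lemma key_lemma {p : ℝ} (hp : 0 < p) (hf0 : ∀ z, 0 ≤ f z) {μ : Measure (Env d)}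
    [IsProbabilityMeasure μ] (henv : bernoulliEnv d p f μ)
    {P : Finset (Fin (N + 1) → Zd d)} (hP : ∀ S, S ∈ P ↔ S ∈ adm d f N)
    {F : ℝ → ℝ} (hFmeas : Measurable F) {C : ℝ} (hC : ∀ x, |F x| ≤ C)
    {T : Fin (N + 1) → Zd d} (hT : T ∈ P) :
    ∫ X, ind d N T X * F (cntR d N P X) ∂μ
      = (p ^ N * walkWeight d N f T) * ∫ X, F ((pathCount d N (tiltEnv d N T X) : ℝ)) ∂μ := by
  classical
  have hTadm := (hP T).1 hT
  have step1 : ∀ X, ind d N T X * F (cntR d N P X)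
      = ind d N T X * F (cntR d N P (tiltEnv d N T X)) := by
    intro X
    unfold ind
    split
    · next hop => rw [tilt_eq_of_open hop]
    · simp
  set E1 := edgeF d N T with hE1def
  set E2 := EA d N P \ edgeF d N T with hE2def
  set r1 : Env d → ((e : E1) → Bool) := fun X e => edgeVal d e X with hr1def
  set r2 : Env d → ((e : E2) → Bool) := fun X e => edgeVal d e X with hr2def
  set φ : ((e : E1) → Bool) → ℝ := fun v => if ∀ e, v e = true then 1 else 0 with hφdef
  set ψ : ((e : E2) → Bool) → ℝ := fun v =>
    F (cntR d N P (tiltEnv d N T (fun n x y =>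
      if h : (n, x, y) ∈ E2 then v ⟨(n, x, y), h⟩ else false))) with hψdef
  have hφ1 : ∀ X, φ (r1 X) = ind d N T X := by
    intro X
    have hiff : (∀ e : E1, r1 X e = true) ↔
        (∀ i : Fin N, X i (T i.castSucc) (T i.succ) = true) := by
      constructor
      · intro h i
        exact h ⟨_, mem_edgeF_iff.2 ⟨i, rfl⟩⟩
      · rintro h ⟨e, he⟩
        obtain ⟨i, rfl⟩ := mem_edgeF_iff.1 he
        exact h i
    unfold ind
    exact if_congr hiff rfl rfl
  have hψ1 : ∀ X, ψ (r2 X) = F (cntR d N P (tiltEnv d N T X)) := by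
    intro X
    refine congrArg F (cntR_tilt_congr ?_)
    rintro ⟨n, x, y⟩ he
    show (if h : (n, x, y) ∈ E2 then r2 X ⟨(n, x, y), h⟩ else false) = X n x y
    rw [dif_pos he]
    rfl
  have hmeas_edge : ∀ e : ℕ × Zd d × Zd d, Measurable (edgeVal d e) :=
    fun e => meas_eval e.1 e.2.1 e.2.2
  have hIndep : IndepFun r1 r2 μ :=
    henv.1.indepFun_finset E1 E2 Finset.disjoint_sdiff hmeas_edge
  have hφm : Measurable φ := measurable_of_countable φ
  have hψm : Measurable ψ := measurable_of_countable ψ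
  have hcomp : IndepFun (φ ∘ r1) (ψ ∘ r2) μ := hIndep.comp hφm hψm
  have hr2m : Measurable r2 := measurable_pi_lambda _ fun e => hmeas_edge e
  have int1 : Integrable (φ ∘ r1) μ := by
    have h1 : (φ ∘ r1) = ind d N T := funext hφ1
    rw [h1]
    refine Integrable.mono' (integrable_const 1) (meas_ind T).aestronglyMeasurable
      (ae_of_all _ fun X => ?_)
    rw [Real.norm_eq_abs]
    unfold ind
    split <;> simp
  have int2 : Integrable (ψ ∘ r2) μ := by
    refine Integrable.mono' (integrable_const C) (hψm.comp hr2m).aestronglyMeasurable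
      (ae_of_all _ fun X => ?_)
    rw [Real.norm_eq_abs, Function.comp_apply, hψ1 X]
    exact hC _
  have hmul := hcomp.integral_fun_mul_eq_mul_integral int1.aestronglyMeasurable int2.aestronglyMeasurable
  have hint1 : ∫ X, (φ ∘ r1) X ∂μ = p ^ N * walkWeight d N f T := by
    have h1 : (φ ∘ r1) = ind d N T := funext hφ1
    rw [h1]
    have hind : ∀ X, ind d N T X
        = Set.indicator {X : Env d | ∀ i : Fin N, X i (T i.castSucc) (T i.succ) = true}
            (fun _ => (1 : ℝ)) X := by
      intro X
      rw [Set.indicator_apply]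
      rfl
    rw [integral_congr_ae (ae_of_all _ hind), integral_indicator (meas_set_open T),
      setIntegral_const, smul_eq_mul, mul_one]
    exact meas_open_event henv hp.le hf0 hTadm.1
  have hint2 : ∫ X, (ψ ∘ r2) X ∂μ = ∫ X, F ((pathCount d N (tiltEnv d N T X) : ℝ)) ∂μ := by
    have h1 : (ψ ∘ r2) = fun X => F (cntR d N P (tiltEnv d N T X)) := funext hψ1
    rw [h1]
    refine integral_congr_ae ?_
    filter_upwards [ae_good henv.2] with X hX
    rw [pathCount_eq_cntR hP (good_tilt hX hTadm)]
  calc ∫ X, ind d N T X * F (cntR d N P X) ∂μ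
      = ∫ X, (φ ∘ r1) X * (ψ ∘ r2) X ∂μ := by
        refine integral_congr_ae (ae_of_all _ fun X => ?_)
        simp only [Function.comp_apply, hφ1, hψ1, step1]
    _ = (∫ X, (φ ∘ r1) X ∂μ) * ∫ X, (ψ ∘ r2) X ∂μ := hmul
    _ = (p ^ N * walkWeight d N f T) * ∫ X, F ((pathCount d N (tiltEnv d N T X) : ℝ)) ∂μ := by
        rw [hint1, hint2]
end SB

/-- Size-biasing identity: for bounded measurable `F`,
`E_p ⊗ E[F(Z̃_N)] = E_p[W_N F(Z_N)]`, the left side being the expectation over an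
independent `f`-walk `T` of the path count in the tilted environment. -/
theorem stmt10 (d : ℕ) (f : Zd d → ℝ) (hf0 : ∀ z, 0 ≤ f z)
    (hfin : (Function.support f).Finite) (hsum : ∑ᶠ z, f z = 1)
    (p : ℝ) (hp : 0 < p) (hpmax : ∀ z, p * f z ≤ 1)
    (μ : Measure (Env d)) [IsProbabilityMeasure μ]
    (henv : bernoulliEnv d p f μ) (N : ℕ)
    (F : ℝ → ℝ) (hFmeas : Measurable F) (hFbdd : ∃ C : ℝ, ∀ x, |F x| ≤ C) :
    ∑ᶠ T : Fin (N + 1) → Zd d,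
        walkWeight d N f T * ∫ X, F (pathCount d N (tiltEnv d N T X)) ∂μ
      = ∫ X, W d p N X * F (pathCount d N X) ∂μ := by
  classical
  obtain ⟨C, hC⟩ := hFbdd
  set P : Finset (Fin (N + 1) → Zd d) := (SB.adm_finite d f hfin N).toFinset with hPdef
  have hP : ∀ S, S ∈ P ↔ S ∈ SB.adm d f N := fun S => (SB.adm_finite d f hfin N).mem_toFinset
  have hpN : (p : ℝ) ^ N ≠ 0 := pow_ne_zero N hp.ne'
  have hbddind : ∀ (T : Fin (N + 1) → Zd d) (X : Env d),
      |SB.ind d N T X * F (SB.cntR d N P X)| ≤ C := by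
    intro T X
    rw [abs_mul]
    have h1 : |SB.ind d N T X| ≤ 1 := by unfold SB.ind; split <;> simp
    calc |SB.ind d N T X| * |F (SB.cntR d N P X)| ≤ 1 * C :=
          mul_le_mul h1 (hC _) (abs_nonneg _) zero_le_one
      _ = C := one_mul C
  have hintT : ∀ T : Fin (N + 1) → Zd d,
      Integrable (fun X => SB.ind d N T X * F (SB.cntR d N P X)) μ := by
    intro T
    refine Integrable.mono' (integrable_const C)
      ((SB.meas_ind T).mul (hFmeas.comp (SB.meas_cntR P))).aestronglyMeasurable
      (ae_of_all _ fun X => ?_)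
    rw [Real.norm_eq_abs]
    exact hbddind T X
  have hae : ∀ᵐ X ∂μ, W d p N X * F (pathCount d N X)
      = (∑ T ∈ P, SB.ind d N T X * F (SB.cntR d N P X)) / p ^ N := by
    filter_upwards [SB.ae_good henv.2] with X hX
    rw [W, SB.pathCount_eq_cntR hP hX, div_mul_eq_mul_div]
    congr 1
    calc SB.cntR d N P X * F (SB.cntR d N P X)
        = (∑ T ∈ P, SB.ind d N T X) * F (SB.cntR d N P X) := rfl
      _ = ∑ T ∈ P, SB.ind d N T X * F (SB.cntR d N P X) := by rw [Finset.sum_mul]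
  rw [integral_congr_ae hae, integral_div, integral_finset_sum P fun T _ => hintT T]
  rw [Finset.sum_congr rfl fun T hT => SB.key_lemma hp hf0 henv hP hFmeas hC hT]
  have hfactor : ∑ T ∈ P, (p ^ N * walkWeight d N f T)
        * ∫ X, F ((pathCount d N (tiltEnv d N T X) : ℝ)) ∂μ
      = p ^ N * ∑ T ∈ P, walkWeight d N f T
        * ∫ X, F ((pathCount d N (tiltEnv d N T X) : ℝ)) ∂μ := by
    rw [Finset.mul_sum]
    exact Finset.sum_congr rfl fun T _ => by ring
  rw [hfactor, mul_div_cancel_left₀ _ hpN]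
  refine finsum_eq_sum_of_support_subset _ ?_
  intro T hT
  simp only [Function.mem_support] at hT
  have hw : walkWeight d N f T ≠ 0 := fun h => hT (by rw [h, zero_mul])
  rw [walkWeight] at hw
  by_cases h0 : T 0 = 0
  · rw [if_pos h0] at hw
    refine Finset.mem_coe.2 ((hP T).2 ⟨h0, fun i hfi => hw ?_⟩)
    exact Finset.prod_eq_zero (Finset.mem_univ i) hfi
  · rw [if_neg h0] at hw
    exact absurd rfl hw
end
end

section
/- If under $\mathbb{P}_p\otimes\mathbf{P}$ the size-biased renormalized partition function $\tilde W_N$ converges to $+\infty$ in probability as $N\to\infty$, then $W_\infty = 0$ $\mathbb{P}_p$-almost surely. -/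
open MeasureTheory ProbabilityTheory Filter

noncomputable section

open scoped ENNReal NNReal

set_option maxHeartbeats 1000000

lemma measurable_natCard {Ω α : Type*} [MeasurableSpace Ω] [Countable α]
    (P : α → Ω → Prop) (hP : ∀ a, MeasurableSet {ω | P a ω}) :
    Measurable fun ω => Nat.card {a // P a ω} := by
  classical
  have hset : ∀ t : Finset α, MeasurableSet {ω | {a | P a ω} = ↑t} := by
    intro t
    have h1 : {ω | {a | P a ω} = ↑t} = ⋂ a, {ω | P a ω ↔ a ∈ t} := by
      ext ω
      simp only [Set.mem_setOf_eq, Set.ext_iff, Set.mem_iInter, Finset.mem_coe]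
    rw [h1]
    refine MeasurableSet.iInter fun a => ?_
    by_cases h : a ∈ t
    · have h2 : {ω | P a ω ↔ a ∈ t} = {ω | P a ω} := by ext ω; simp [h]
      rw [h2]; exact hP a
    · have h2 : {ω | P a ω ↔ a ∈ t} = {ω | P a ω}ᶜ := by ext ω; simp [h]
      rw [h2]; exact (hP a).compl
  have hcard : ∀ (ω) (t : Finset α), {a | P a ω} = ↑t → Nat.card {a // P a ω} = t.card := by
    intro ω t ht
    have h3 : Nat.card {a // P a ω} = {a | P a ω}.ncard := Nat.card_coe_set_eq _
    rw [h3, ht, Set.ncard_coe_finset]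
  have hiff : ∀ (ω) (k : ℕ), Nat.card {a // P a ω} = k + 1 ↔
      ∃ t : Finset α, t.card = k + 1 ∧ {a | P a ω} = ↑t := by
    intro ω k
    constructor
    · intro h
      have hfin : {a | P a ω}.Finite := by
        by_contra hinf
        have h3 : Nat.card {a // P a ω} = {a | P a ω}.ncard := Nat.card_coe_set_eq _
        rw [h3, Set.Infinite.ncard (hinf)] at h
        omega
      exact ⟨hfin.toFinset, by rw [← hcard ω _ hfin.coe_toFinset.symm]; exact h,
        hfin.coe_toFinset.symm⟩
    · rintro ⟨t, htc, ht⟩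
      rw [hcard ω t ht, htc]
  refine measurable_to_countable' fun k => ?_
  match k with
  | (k + 1) =>
      have : (fun ω => Nat.card {a // P a ω}) ⁻¹' {k + 1} =
          ⋃ (t : Finset α) (_ : t.card = k + 1), {ω | {a | P a ω} = ↑t} := by
        ext ω
        simp only [Set.mem_preimage, Set.mem_singleton_iff, Set.mem_iUnion, hiff]
        tauto
      rw [this]
      exact MeasurableSet.iUnion fun t => MeasurableSet.iUnion fun _ => hset t
  | 0 =>
      have : (fun ω => Nat.card {a // P a ω}) ⁻¹' {0} =
          (⋃ (t : Finset α) (_ : t.card ≠ 0), {ω | {a | P a ω} = ↑t})ᶜ := by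
        ext ω
        simp only [Set.mem_preimage, Set.mem_singleton_iff, Set.mem_compl_iff, Set.mem_iUnion,
          not_exists]
        constructor
        · intro h t htc ht
          exact htc (by rw [← hcard ω t ht, h])
        · intro h
          by_contra h0
          obtain ⟨k, hk⟩ : ∃ k, Nat.card {a // P a ω} = k + 1 :=
            ⟨Nat.card {a // P a ω} - 1, by omega⟩
          obtain ⟨t, htc, ht⟩ := (hiff ω k).mp hk
          exact h t (by omega) ht
      rw [this]
      exact (MeasurableSet.iUnion fun t => MeasurableSet.iUnion fun _ => hset t).compl

lemma measurable_edgeVal (d : ℕ) (e : ℕ × Zd d × Zd d) : Measurable (edgeVal d e) :=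
  (measurable_pi_apply e.2.2).comp ((measurable_pi_apply e.2.1).comp (measurable_pi_apply e.1))

lemma measurableSet_edge (d : ℕ) (n : ℕ) (x y : Zd d) :
    MeasurableSet {X : Env d | X n x y = true} :=
  (measurable_edgeVal d (n, x, y)) (measurableSet_singleton true)

lemma measurable_pathCount (d N : ℕ) : Measurable fun X => pathCount d N X := by
  unfold pathCount
  refine measurable_natCard _ fun S => ?_
  by_cases h : S 0 = 0
  · have h2 : {X : Env d | S 0 = 0 ∧ ∀ i : Fin N, X i (S i.castSucc) (S i.succ) = true} =
        ⋂ i : Fin N, {X : Env d | X i (S i.castSucc) (S i.succ) = true} := by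
      ext X; simp [h]
    rw [h2]
    exact MeasurableSet.iInter fun i => measurableSet_edge d i _ _
  · have h2 : {X : Env d | S 0 = 0 ∧ ∀ i : Fin N, X i (S i.castSucc) (S i.succ) = true} = ∅ := by
      ext X; simp [h]
    rw [h2]; exact MeasurableSet.empty

lemma tele (d N : ℕ) (T : Fin (N + 1) → Zd d) (h0 : T 0 = 0) (j : Fin (N + 1)) :
    T j = ∑ i : Fin N, if (i : ℕ) < (j : ℕ) then (T i.succ - T i.castSucc) else 0 := by
  induction j using Fin.induction with
  | zero => simpa using h0
  | succ i ih =>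
    have split : ∀ i' : Fin N, (if (i' : ℕ) < (i.succ : ℕ) then (T i'.succ - T i'.castSucc) else 0)
        = (if (i' : ℕ) < ((i.castSucc : Fin (N+1)) : ℕ) then (T i'.succ - T i'.castSucc) else 0)
          + (if i' = i then (T i'.succ - T i'.castSucc) else 0) := by
      intro i'
      by_cases h1 : i' = i
      · subst h1; simp [Fin.val_succ]
      · have hne : (i' : ℕ) ≠ (i : ℕ) := fun h => h1 (Fin.ext h)
        by_cases h2 : (i' : ℕ) < (i : ℕ)
        · simp only [Fin.val_succ, Fin.coe_castSucc]
          rw [if_pos (by omega), if_pos h2, if_neg h1, add_zero]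
        · simp only [Fin.val_succ, Fin.coe_castSucc]
          rw [if_neg (by omega), if_neg h2, if_neg h1, add_zero]
    simp only [split]
    rw [Finset.sum_add_distrib, ← ih, Finset.sum_ite_eq' Finset.univ i]
    simp

lemma walkWeight_support_finite (d N : ℕ) (f : Zd d → ℝ)
    (hfin : (Function.support f).Finite) :
    (Function.support (walkWeight d N f)).Finite := by
  classical
  set R : (Fin N → Zd d) → (Fin (N + 1) → Zd d) :=
    fun σ j => ∑ i : Fin N, if (i : ℕ) < (j : ℕ) then σ i else 0 with hR
  have hpi : {σ : Fin N → Zd d | ∀ i, σ i ∈ Function.support f}.Finite := by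
    have := Set.Finite.pi (fun _ : Fin N => hfin)
    convert this using 1
    ext σ; simp [Set.mem_pi]
  refine ((hpi.image R).subset ?_)
  intro T hT
  rw [Function.mem_support, walkWeight] at hT
  by_cases h0 : T 0 = 0
  · rw [if_pos h0] at hT
    refine ⟨fun i => T i.succ - T i.castSucc, fun i => ?_, ?_⟩
    · rw [Function.mem_support]
      exact fun hz => hT (Finset.prod_eq_zero (Finset.mem_univ i) hz)
    · funext j
      rw [hR]
      exact (tele d N T h0 j).symm
  · rw [if_neg h0] at hT; exact absurd rfl hT

lemma measurable_pi_iff' {α δ : Type*} {π : δ → Type*} (mα : MeasurableSpace α)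
    [∀ a, MeasurableSpace (π a)] {g : α → ∀ a, π a} :
    Measurable[mα] g ↔ ∀ a, Measurable[mα] fun x => g x a := by
  letI := mα
  exact measurable_pi_iff

lemma measurable_W (d : ℕ) (p : ℝ) (N : ℕ) : Measurable (W d p N) := by
  unfold W
  exact (measurable_from_top.comp (measurable_pathCount d N)).div_const _

lemma tiltEnv_eq_self (d N : ℕ) (T : Fin (N + 1) → Zd d) (X : Env d)
    (hX : ∀ i : Fin N, X i (T i.castSucc) (T i.succ) = true) :
    tiltEnv d N T X = X := by
  funext n x y
  unfold tiltEnv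
  split_ifs with h1 h2
  · obtain ⟨hx, hy⟩ := h2
    have := hX ⟨n, h1⟩
    rw [show (⟨n, h1⟩ : Fin N).castSucc = ⟨n, Nat.lt_succ_of_lt h1⟩ from rfl,
      show (⟨n, h1⟩ : Fin N).succ = ⟨n + 1, Nat.succ_lt_succ h1⟩ from rfl, hx, hy] at this
    exact this.symm
  · rfl
  · rfl

theorem keyLB (d : ℕ) (f : Zd d → ℝ) (hf0 : ∀ z, 0 ≤ f z)
    (hfin : (Function.support f).Finite)
    (p : ℝ) (hp : 0 < p) (μ : Measure (Env d)) [IsProbabilityMeasure μ]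
    (henv : bernoulliEnv d p f μ) (N : ℕ) (K a : ℝ) (ha : 0 ≤ a) :
    a * (μ {X | a ≤ W d p N X ∧ W d p N X ≤ K}).toReal ≤ tiltTailProb d N f p μ K := by
  classical
  have hpN : (0:ℝ) < p ^ N := pow_pos hp N
  set A : Set (Env d) := {X | W d p N X ≤ K} with hA_def
  have hA : MeasurableSet A := measurable_W d p N measurableSet_Iic
  set B : Set (Env d) := {X | a ≤ W d p N X} with hB_def
  have hB : MeasurableSet B := measurable_W d p N measurableSet_Ici
  set E : (Fin (N + 1) → Zd d) → Set (Env d) :=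
    fun T => {X | ∀ i : Fin N, X i (T i.castSucc) (T i.succ) = true} with hE_def
  have hE : ∀ T, MeasurableSet (E T) := by
    intro T
    have : E T = ⋂ i : Fin N, {X : Env d | X i (T i.castSucc) (T i.succ) = true} := by
      ext X; simp [hE_def]
    rw [this]
    exact MeasurableSet.iInter fun i => measurableSet_edge d i _ _
  -- the measurable spaces
  set m : (ℕ × Zd d × Zd d) → MeasurableSpace (Env d) :=
    fun e => MeasurableSpace.comap (edgeVal d e) (inferInstance : MeasurableSpace Bool) with hm_def
  have h_le : ∀ e, m e ≤ (inferInstance : MeasurableSpace (Env d)) :=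
    fun e => measurable_iff_comap_le.mp (measurable_edgeVal d e)
  -- step: independence
  have hprod : ∀ T : Fin (N + 1) → Zd d,
      μ ((tiltEnv d N T) ⁻¹' A ∩ E T) = μ ((tiltEnv d N T) ⁻¹' A) * μ (E T) := by
    intro T
    set F : Set (ℕ × Zd d × Zd d) :=
      Set.range (fun i : Fin N => ((i : ℕ), T i.castSucc, T i.succ)) with hF_def
    have hIndep : Indep (⨆ e ∈ F, m e) (⨆ e ∈ Fᶜ, m e) μ :=
      indep_biSup_compl h_le henv.1.iIndep F
    have hEmem : MeasurableSet[⨆ e ∈ F, m e] (E T) := by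
      have : E T = ⋂ i : Fin N,
          (edgeVal d ((i : ℕ), T i.castSucc, T i.succ)) ⁻¹' {true} := by
        ext X; simp [hE_def, edgeVal]
      rw [this]
      refine MeasurableSet.iInter fun i => ?_
      have hle : m ((i : ℕ), T i.castSucc, T i.succ) ≤ ⨆ e ∈ F, m e :=
        le_iSup₂ (f := fun e (_ : e ∈ F) => m e) _ ⟨i, rfl⟩
      exact hle _ ⟨{true}, trivial, rfl⟩
    have hΦ : Measurable[⨆ e ∈ Fᶜ, m e] (tiltEnv d N T) := by
      refine (measurable_pi_iff' _).mpr fun n => (measurable_pi_iff' _).mpr fun x =>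
        (measurable_pi_iff' _).mpr fun y => ?_
      have hedge : ∀ (e : ℕ × Zd d × Zd d), e ∉ F →
          Measurable[⨆ e ∈ Fᶜ, m e] (edgeVal d e) := by
        intro e he
        exact measurable_iff_comap_le.mpr (le_iSup₂ (f := fun e (_ : e ∈ Fᶜ) => m e) e he)
      by_cases h1 : n < N
      · by_cases h2 : T ⟨n, Nat.lt_succ_of_lt h1⟩ = x ∧ T ⟨n + 1, Nat.succ_lt_succ h1⟩ = y
        · have : (fun X => tiltEnv d N T X n x y) = fun _ => true := by
            funext X; unfold tiltEnv; rw [dif_pos h1, if_pos h2]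
          rw [this]; exact measurable_const
        · have : (fun X => tiltEnv d N T X n x y) = edgeVal d (n, x, y) := by
            funext X; unfold tiltEnv; rw [dif_pos h1, if_neg h2]; rfl
          rw [this]
          refine hedge _ ?_
          rintro ⟨i, hi⟩
          have h3 : (i : ℕ) = n := congrArg Prod.fst hi
          have h4 : T i.castSucc = x := congrArg (fun q => q.2.1) hi
          have h5 : T i.succ = y := congrArg (fun q => q.2.2) hi
          apply h2
          have hieq : i = ⟨n, h1⟩ := Fin.ext h3
          subst hieq
          constructor
          · rw [← h4]; rfl
          · rw [← h5]; rfl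
      · have : (fun X => tiltEnv d N T X n x y) = edgeVal d (n, x, y) := by
          funext X; unfold tiltEnv; rw [dif_neg h1]; rfl
        rw [this]
        refine hedge _ ?_
        rintro ⟨i, hi⟩
        have h3 : (i : ℕ) = n := congrArg Prod.fst hi
        have h4 := i.isLt
        omega
    have hAmem : MeasurableSet[⨆ e ∈ Fᶜ, m e] ((tiltEnv d N T) ⁻¹' A) := hΦ hA
    have := (Indep_iff _ _ _).mp hIndep (E T) ((tiltEnv d N T) ⁻¹' A) hEmem hAmem
    rw [Set.inter_comm] at this
    rw [this, mul_comm]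
  -- step: measure of E T
  have hET : ∀ T : Fin (N + 1) → Zd d,
      μ (E T) = ENNReal.ofReal (p ^ N * ∏ i : Fin N, f (T i.succ - T i.castSucc)) := by
    intro T
    set e : Fin N → ℕ × Zd d × Zd d := fun i => ((i : ℕ), T i.castSucc, T i.succ) with he_def
    have hinj : ∀ i ∈ Finset.univ, ∀ j ∈ Finset.univ, e i = e j → i = j := by
      intro i _ j _ hij
      exact Fin.ext (congrArg Prod.fst hij)
    set s : (ℕ × Zd d × Zd d) → Set (Env d) := fun q => (edgeVal d q) ⁻¹' {true} with hs_def
    have hint : E T = ⋂ q ∈ Finset.image e Finset.univ, s q := by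
      ext X
      simp only [hE_def, Set.mem_setOf_eq, Set.mem_iInter, Finset.mem_image, Finset.mem_univ,
        true_and, hs_def, Set.mem_preimage, Set.mem_singleton_iff, edgeVal]
      constructor
      · rintro h q ⟨i, rfl⟩; exact h i
      · intro h i; exact h _ ⟨i, rfl⟩
    have hmeas : ∀ q ∈ Finset.image e Finset.univ,
        MeasurableSet[m q] (s q) := fun q _ => ⟨{true}, trivial, rfl⟩
    rw [hint, henv.1.iIndep.meas_biInter hmeas, Finset.prod_image hinj]
    have hone : ∀ i : Fin N, μ (s (e i)) =
        ENNReal.ofReal (p * f (T i.succ - T i.castSucc)) := by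
      intro i
      have : s (e i) = {X : Env d | X i (T i.castSucc) (T i.succ) = true} := by
        ext X; simp [hs_def, he_def, edgeVal]
      rw [this, henv.2]
    simp only [hone]
    rw [← ENNReal.ofReal_prod_of_nonneg (fun i _ => mul_nonneg hp.le (hf0 _))]
    congr 1
    rw [Finset.prod_mul_distrib, Finset.prod_const]
    simp
  -- step: per-T identity
  set gg : (Fin (N + 1) → Zd d) → ℝ :=
    fun T => if T 0 = 0 then (μ (A ∩ E T)).toReal else 0 with hgg_def
  have hterm : ∀ T : Fin (N + 1) → Zd d,
      walkWeight d N f T * (μ ((tiltEnv d N T) ⁻¹' A)).toReal = (p ^ N)⁻¹ * gg T := by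
    intro T
    by_cases h0 : T 0 = 0
    · have hAE : A ∩ E T = (tiltEnv d N T) ⁻¹' A ∩ E T := by
        ext X
        constructor
        · rintro ⟨hXA, hXE⟩
          exact ⟨by rw [Set.mem_preimage, tiltEnv_eq_self d N T X hXE]; exact hXA, hXE⟩
        · rintro ⟨hXA, hXE⟩
          rw [Set.mem_preimage, tiltEnv_eq_self d N T X hXE] at hXA
          exact ⟨hXA, hXE⟩
      have : μ (A ∩ E T) = μ ((tiltEnv d N T) ⁻¹' A) *
          ENNReal.ofReal (p ^ N * ∏ i : Fin N, f (T i.succ - T i.castSucc)) := by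
        rw [hAE, hprod T, hET T]
      rw [hgg_def]
      simp only [if_pos h0]
      rw [this, ENNReal.toReal_mul, ENNReal.toReal_ofReal
        (mul_nonneg hpN.le (Finset.prod_nonneg fun i _ => hf0 _))]
      rw [walkWeight, if_pos h0]
      field_simp
    · rw [walkWeight, if_neg h0, hgg_def]
      simp [h0]
  -- step: rewrite tiltTailProb as a finite sum
  have hTT : tiltTailProb d N f p μ K =
      ∑ᶠ T, walkWeight d N f T * (μ ((tiltEnv d N T) ⁻¹' A)).toReal := rfl
  have hwsupp := walkWeight_support_finite d N f hfin
  set 𝒯 : Finset (Fin (N + 1) → Zd d) := hwsupp.toFinset with h𝒯_def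
  have hsub : Function.support
      (fun T => walkWeight d N f T * (μ ((tiltEnv d N T) ⁻¹' A)).toReal) ⊆ ↑𝒯 := by
    intro T hT
    rw [Function.mem_support] at hT
    have : walkWeight d N f T ≠ 0 := fun h => hT (by rw [h, zero_mul])
    simpa [h𝒯_def] using this
  rw [hTT, finsum_eq_finset_sum_of_support_subset _ hsub]
  simp only [hterm]
  rw [← Finset.mul_sum]
  have h𝒯0 : ∀ T ∈ 𝒯, gg T = (μ (A ∩ E T)).toReal := by
    intro T hT
    rw [h𝒯_def, Set.Finite.mem_toFinset, Function.mem_support, walkWeight] at hT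
    by_cases h0 : T 0 = 0
    · rw [hgg_def]; simp only [if_pos h0]
    · rw [if_neg h0] at hT; exact absurd rfl hT
  rw [Finset.sum_congr rfl h𝒯0]
  -- a.e. all open edges have admissible step
  have hG : ∀ᵐ X ∂μ, ∀ (n : ℕ) (x y : Zd d), X n x y = true → f (y - x) ≠ 0 := by
    refine ae_all_iff.mpr fun n => ae_all_iff.mpr fun x => ae_all_iff.mpr fun y => ?_
    by_cases hf : f (y - x) = 0
    · have h0 : μ {X : Env d | X n x y = true} = 0 := by
        rw [henv.2 n x y, hf, mul_zero, ENNReal.ofReal_zero]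
      have h1 : ∀ᵐ X ∂μ, X ∉ {X : Env d | X n x y = true} := measure_eq_zero_iff_ae_notMem.mp h0
      filter_upwards [h1] with X hX
      intro htrue
      exact absurd htrue hX
    · exact ae_of_all _ fun X _ => hf
  -- pointwise counting bound
  have hXbound : ∀ X : Env d, (∀ (n : ℕ) (x y : Zd d), X n x y = true → f (y - x) ≠ 0) →
      ((pathCount d N X : ℝ≥0∞)) ≤ ∑ T ∈ 𝒯, Set.indicator (E T) (fun _ => (1:ℝ≥0∞)) X := by
    intro X hGX
    have hsub2 : {S : Fin (N + 1) → Zd d |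
        S 0 = 0 ∧ ∀ i : Fin N, X i (S i.castSucc) (S i.succ) = true} ⊆
        ↑(𝒯.filter fun T => X ∈ E T) := by
      rintro S ⟨hS0, hSopen⟩
      rw [Finset.coe_filter, Set.mem_setOf_eq]
      refine ⟨?_, hSopen⟩
      rw [h𝒯_def, Set.Finite.mem_toFinset, Function.mem_support, walkWeight, if_pos hS0]
      refine Finset.prod_ne_zero_iff.mpr fun i _ => ?_
      exact hGX i _ _ (hSopen i)
    have hcount : pathCount d N X ≤ (𝒯.filter fun T => X ∈ E T).card := by
      have h3 : pathCount d N X = ({S : Fin (N + 1) → Zd d |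
          S 0 = 0 ∧ ∀ i : Fin N, X i (S i.castSucc) (S i.succ) = true}).ncard :=
        Nat.card_coe_set_eq _
      rw [h3]
      calc _ ≤ (↑(𝒯.filter fun T => X ∈ E T) : Set _).ncard :=
            Set.ncard_le_ncard hsub2 (Finset.finite_toSet _)
        _ = _ := Set.ncard_coe_finset _
    have hsum3 : ∑ T ∈ 𝒯, Set.indicator (E T) (fun _ => (1:ℝ≥0∞)) X =
        ((𝒯.filter fun T => X ∈ E T).card : ℝ≥0∞) := by
      rw [← Finset.sum_boole]
      refine Finset.sum_congr rfl fun T _ => ?_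
      rw [Set.indicator_apply]
    rw [hsum3]
    exact_mod_cast Nat.cast_le.mpr hcount
  -- main ENNReal estimate
  have hEN : ENNReal.ofReal (a * p ^ N) * μ (A ∩ B) ≤ ∑ T ∈ 𝒯, μ (A ∩ E T) := by
    calc ENNReal.ofReal (a * p ^ N) * μ (A ∩ B)
        = ∫⁻ X in A, Set.indicator B (fun _ => ENNReal.ofReal (a * p ^ N)) X ∂μ := by
          rw [lintegral_indicator_const hB, Measure.restrict_apply hB, Set.inter_comm]
      _ ≤ ∫⁻ X in A, ∑ T ∈ 𝒯, Set.indicator (E T) (fun _ => (1:ℝ≥0∞)) X ∂μ := by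
          refine lintegral_mono_ae ?_
          filter_upwards [ae_restrict_of_ae hG] with X hGX
          by_cases hXB : X ∈ B
          · rw [Set.indicator_of_mem hXB]
            have h1 : a * p ^ N ≤ (pathCount d N X : ℝ) := by
              have := hXB
              rw [hB_def, Set.mem_setOf_eq, W, le_div_iff₀ hpN] at this
              exact this
            calc ENNReal.ofReal (a * p ^ N) ≤ ENNReal.ofReal ((pathCount d N X : ℝ)) :=
                  ENNReal.ofReal_le_ofReal h1
              _ = ((pathCount d N X : ℕ) : ℝ≥0∞) := ENNReal.ofReal_natCast _
              _ ≤ _ := hXbound X hGX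
          · rw [Set.indicator_of_notMem hXB]
            exact zero_le
      _ = ∑ T ∈ 𝒯, μ (A ∩ E T) := by
          rw [lintegral_finset_sum _ (fun T _ => measurable_const.indicator (hE T))]
          refine Finset.sum_congr rfl fun T _ => ?_
          rw [lintegral_indicator_const (hE T), Measure.restrict_apply (hE T), one_mul,
            Set.inter_comm]
  -- back to the reals
  have hfin2 : ∑ T ∈ 𝒯, μ (A ∩ E T) ≠ ⊤ :=
    (ENNReal.sum_lt_top.mpr fun T _ => measure_lt_top μ _).ne
  have h2 := ENNReal.toReal_mono hfin2 hEN
  rw [ENNReal.toReal_mul, ENNReal.toReal_ofReal (mul_nonneg ha hpN.le),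
    ENNReal.toReal_sum (fun T _ => measure_ne_top μ _)] at h2
  have hSet : {X | a ≤ W d p N X ∧ W d p N X ≤ K} = A ∩ B := by
    ext X
    simp only [Set.mem_setOf_eq, Set.mem_inter_iff, hA_def, hB_def]
    tauto
  rw [hSet]
  have h3 := mul_le_mul_of_nonneg_left h2 (inv_nonneg.mpr hpN.le)
  calc a * (μ (A ∩ B)).toReal = (p ^ N)⁻¹ * (a * p ^ N * (μ (A ∩ B)).toReal) := by
        field_simp
    _ ≤ (p ^ N)⁻¹ * ∑ T ∈ 𝒯, (μ (A ∩ E T)).toReal := h3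

/-- If `W̃_N → ∞` in probability under `ℙ_p ⊗ P`, then `W_∞ = 0`
`ℙ_p`-almost surely. -/
theorem stmt11 (d : ℕ) (f : Zd d → ℝ) (hf0 : ∀ z, 0 ≤ f z)
    (hfin : (Function.support f).Finite) (hsum : ∑ᶠ z, f z = 1)
    (p : ℝ) (hp : 0 < p) (hpmax : ∀ z, p * f z ≤ 1)
    (μ : Measure (Env d)) [IsProbabilityMeasure μ]
    (henv : bernoulliEnv d p f μ)
    (Winf : Env d → ℝ)
    (hWinf : ∀ᵐ X ∂μ, Tendsto (fun N => W d p N X) atTop (nhds (Winf X)))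
    (hdiv : ∀ K : ℝ, Tendsto (fun N => tiltTailProb d N f p μ K) atTop (nhds 0)) :
    ∀ᵐ X ∂μ, Winf X = 0 := by
  by_contra hcon
  rw [ae_iff] at hcon
  set C : Set (Env d) := {X | Tendsto (fun N => W d p N X) atTop (nhds (Winf X))} with hC
  set Dk : ℕ → Set (Env d) := fun k =>
    {X | X ∈ C ∧ 1 / ((k : ℝ) + 1) < Winf X ∧ Winf X < (k : ℝ) + 1} with hDk
  have hC0 : μ Cᶜ = 0 := by
    have := ae_iff.mp hWinf
    exact this
  have hDcover : {X | ¬ Winf X = 0} ⊆ (⋃ k, Dk k) ∪ Cᶜ := by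
    intro X hX
    by_cases hXC : X ∈ C
    · left
      have hW0 : 0 ≤ Winf X := by
        refine ge_of_tendsto hXC (Eventually.of_forall fun N => ?_)
        exact div_nonneg (Nat.cast_nonneg _) (pow_pos hp N).le
      have hWpos : 0 < Winf X := lt_of_le_of_ne hW0 (Ne.symm hX)
      obtain ⟨k, hk⟩ := exists_nat_gt (max (1 / Winf X) (Winf X))
      refine Set.mem_iUnion.mpr ⟨k, hXC, ?_, ?_⟩
      · rw [div_lt_iff₀ (by positivity)]
        have h1 : 1 / Winf X < (k : ℝ) + 1 :=
          lt_trans (lt_of_le_of_lt (le_max_left _ _) hk) (lt_add_one _)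
        rw [div_lt_iff₀ hWpos] at h1
        nlinarith
      · exact lt_trans (lt_of_le_of_lt (le_max_right _ _) hk) (lt_add_one _)
    · right; exact hXC
  have hpos : μ (⋃ k, Dk k) ≠ 0 := by
    intro h0
    exact hcon (measure_mono_null hDcover (measure_union_null h0 hC0))
  obtain ⟨k, hk⟩ : ∃ k, μ (Dk k) ≠ 0 := by
    by_contra hall
    push_neg at hall
    exact hpos (measure_iUnion_null hall)
  set a : ℝ := 1 / ((k : ℝ) + 1) with ha_def
  set Kk : ℝ := (k : ℝ) + 1 with hKk_def
  have ha : (0:ℝ) < a := by rw [ha_def]; positivity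
  set S : ℕ → Set (Env d) := fun N => {X | a ≤ W d p N X ∧ W d p N X ≤ Kk} with hS
  have hDS : Dk k ⊆ ⋃ M, ⋂ N, ⋂ (_ : M ≤ N), S N := by
    rintro X ⟨hXC, h1, h2⟩
    have h3 : ∀ᶠ N in atTop, a ≤ W d p N X ∧ W d p N X ≤ Kk :=
      (hXC.eventually_const_le h1).and (hXC.eventually_le_const h2)
    obtain ⟨M, hM⟩ := eventually_atTop.mp h3
    exact Set.mem_iUnion.mpr
      ⟨M, Set.mem_iInter.mpr fun N => Set.mem_iInter.mpr fun hMN => hM N hMN⟩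
  have hk2 : μ (⋃ M, ⋂ N, ⋂ (_ : M ≤ N), S N) ≠ 0 :=
    fun h0 => hk (measure_mono_null hDS h0)
  obtain ⟨M, hM⟩ : ∃ M, μ (⋂ N, ⋂ (_ : M ≤ N), S N) ≠ 0 := by
    by_contra hall
    push_neg at hall
    exact hk2 (measure_iUnion_null hall)
  set c := μ (⋂ N, ⋂ (_ : M ≤ N), S N) with hc
  have hcS : ∀ N, M ≤ N → c ≤ μ (S N) := fun N hN =>
    measure_mono (Set.iInter₂_subset N hN)
  have hcR : 0 < a * c.toReal :=
    mul_pos ha (ENNReal.toReal_pos hM (measure_ne_top μ _))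
  have hev : ∀ᶠ N in atTop, tiltTailProb d N f p μ Kk < a * c.toReal :=
    (hdiv Kk).eventually_lt_const hcR
  obtain ⟨N, hN1, hN2⟩ := (hev.and (eventually_ge_atTop M)).exists
  have hKB := keyLB d f hf0 hfin p hp μ henv N Kk a ha.le
  have hfinal : a * c.toReal ≤ tiltTailProb d N f p μ Kk := by
    refine le_trans ?_ hKB
    have h4 := ENNReal.toReal_mono (measure_ne_top μ _) (hcS N hN2)
    exact mul_le_mul_of_nonneg_left h4 ha.le
  exact absurd hfinal (not_le.mpr hN1)
end
end
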